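/- arXiv:1911.13193 — 6 statements merged into one kernel-verified Lean document; each statement's English description precedes it below -/
import Mathlib

section
/- Let q be a prime power, let ℓ, u, v, ω be integers with 0 ≤ u ≤ ℓ, 0 ≤ v ≤ ℓ and 0 ≤ ω ≤ min{u,v}, and let U be a fixed u-dimensional F_q-subspace of F_q^ℓ. Then the number of v-dimensional F_q-subspaces V of F_q^ℓ with dim(U ∩ V) ≥ ω equals Σ_{i=ω}^{min{u,v}} [ℓ−u, v−i]_q · [u, i]_q · q^{(u−i)(v−i)}. -/
open Module Submodule Finset Set

set_option linter.unusedSectionVars false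
set_option linter.unusedVariables false
set_option maxHeartbeats 1000000

/-- The Gaussian binomial coefficient `[a, b]_q`, defined as
`∏_{i=0}^{b-1} (q^{a-i} - 1)/(q^{b-i} - 1)` for `0 ≤ b ≤ a`, and `0` otherwise. -/
noncomputable def gaussBinom (q : ℚ) (a b : ℤ) : ℚ :=
  if 0 ≤ b ∧ b ≤ a then
    ∏ i ∈ Finset.range b.toNat, (q ^ (a - i).toNat - 1) / (q ^ (b - i).toNat - 1)
  else 0

variable {F : Type} [Field F] [Fintype F]
variable {E : Type} [AddCommGroup E] [Module F E] [FiniteDimensional F E] [Finite E]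

lemma my_card_sigma {ι : Type*} [Fintype ι] (f : ι → Type*) [∀ i, Finite (f i)] :
    Nat.card (Σ i, f i) = ∑ i, Nat.card (f i) := by
  letI := fun i => Fintype.ofFinite (f i)
  simp [Nat.card_eq_fintype_card, Fintype.card_sigma]

lemma card_compl_submodule (P : Submodule F E) :
    Nat.card {x : E // x ∉ P} =
      Fintype.card F ^ finrank F E - Fintype.card F ^ finrank F P := by
  classical
  cases nonempty_fintype E
  rw [Nat.card_eq_fintype_card, Fintype.card_subtype_compl,
    card_eq_pow_finrank (K := F) (V := E), card_eq_pow_finrank (K := F) (V := P)]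


lemma finrank_eq_map_add {E' : Type*} [AddCommGroup E'] [Module F E']
    (f : E →ₗ[F] E') (P : Submodule F E) :
    finrank F P = finrank F (P.map f) + finrank F ↥(LinearMap.ker f ⊓ P) := by
  have h := LinearMap.finrank_range_add_finrank_ker (f.domRestrict P)
  rw [LinearMap.range_domRestrict, LinearMap.ker_domRestrict] at h
  have e : ↥(comap P.subtype (LinearMap.ker f)) ≃ₗ[F] ↥(LinearMap.ker f ⊓ P) := by
    have : comap P.subtype (LinearMap.ker f) = comap P.subtype (LinearMap.ker f ⊓ P) := by
      ext x; simp [x.2]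
    rw [this]
    exact Submodule.comapSubtypeEquivOfLe inf_le_right
  rw [e.finrank_eq] at h
  omega

lemma finrank_comap_mkQ (W : Submodule F E) (S : Submodule F (E ⧸ W)) :
    finrank F (S.comap W.mkQ) = finrank F S + finrank F W := by
  have h := finrank_eq_map_add (W.mkQ) (S.comap W.mkQ)
  rw [Submodule.map_comap_eq, Submodule.range_mkQ, top_inf_eq, Submodule.ker_mkQ,
    inf_eq_left.2 ?_] at h
  · exact h
  · intro x hx
    simp [Submodule.mem_comap, (Submodule.Quotient.mk_eq_zero W).2 hx]



lemma card_li_mkQ (W : Submodule F E) (k : ℕ) :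
    Nat.card {z : Fin k → E // LinearIndependent F (W.mkQ ∘ z)} =
      ∏ j ∈ range k, (Fintype.card F ^ finrank F E - Fintype.card F ^ (finrank F W + j)) := by
  induction k with
  | zero =>
      rw [Finset.prod_range_zero]
      have : ∀ z : Fin 0 → E, LinearIndependent F (W.mkQ ∘ z) :=
        fun z => linearIndependent_empty_type
      rw [Nat.card_eq_one_iff_unique.2 ⟨⟨fun a b => by
        apply Subtype.ext; funext j; exact absurd j.2 (by omega)⟩,
        ⟨⟨fun j => 0, this _⟩⟩⟩]
  | succ k ih =>
      classical
      letI : Fintype E := Fintype.ofFinite E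
      set p : (Fin k → E) → E → Prop := fun a b =>
        LinearIndependent F (W.mkQ ∘ a) ∧
          b ∉ (span F (Set.range (W.mkQ ∘ a))).comap W.mkQ with hp
      have e1 : {z : Fin (k+1) → E // LinearIndependent F (W.mkQ ∘ z)} ≃
          {x : (Fin k → E) × E // p x.1 x.2} := by
        refine ⟨fun w => ⟨(Fin.init w.1, w.1 (Fin.last k)), ?_, ?_⟩,
          fun x => ⟨Fin.snoc x.1.1 x.1.2, ?_⟩, ?_, ?_⟩
        · have h := w.2
          rw [← Fin.snoc_init_self w.1, Fin.comp_snoc] at h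
          exact (linearIndependent_fin_snoc.1 h).1
        · have h := w.2
          rw [← Fin.snoc_init_self w.1, Fin.comp_snoc] at h
          simpa [Submodule.mem_comap, Fin.comp_init] using
            (linearIndependent_fin_snoc.1 h).2
        · rw [Fin.comp_snoc]
          refine linearIndependent_fin_snoc.2 ⟨x.2.1, ?_⟩
          simpa [Submodule.mem_comap] using x.2.2
        · intro w; exact Subtype.ext (Fin.snoc_init_self w.1)
        · rintro ⟨⟨a, b⟩, hab⟩
          refine Subtype.ext (Prod.ext ?_ ?_) <;> simp
      rw [Nat.card_congr (e1.trans (Equiv.subtypeProdEquivSigmaSubtype p)),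
        my_card_sigma, Finset.prod_range_succ, ← ih]
      have hfib : ∀ a : Fin k → E, Nat.card {b : E // p a b} =
          if LinearIndependent F (W.mkQ ∘ a) then
            Fintype.card F ^ finrank F E - Fintype.card F ^ (finrank F W + k)
          else 0 := by
        intro a
        by_cases hLI : LinearIndependent F (W.mkQ ∘ a)
        · rw [if_pos hLI]
          rw [Nat.card_congr (Equiv.subtypeEquivRight (fun b => by
            simp only [hp]; exact and_iff_right hLI))]
          rw [card_compl_submodule, finrank_comap_mkQ]
          congr 2
          rw [finrank_span_eq_card hLI, Fintype.card_fin]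
          omega
        · rw [if_neg hLI]
          rw [Nat.card_eq_zero]
          left
          constructor
          rintro ⟨b, hb1, hb2⟩
          exact hLI hb1
      rw [Finset.sum_congr rfl (fun a _ => hfib a), Finset.sum_ite, Finset.sum_const,
        Finset.sum_const, smul_zero, add_zero, smul_eq_mul, Nat.card_eq_fintype_card,
        Fintype.card_subtype]



lemma card_li_mem_mkQ (U V : Submodule F E) (k : ℕ) :
    Nat.card {z : Fin k → E // (∀ j, z j ∈ V) ∧ LinearIndependent F (U.mkQ ∘ z)} =
      ∏ j ∈ range k, (Fintype.card F ^ finrank F V -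
        Fintype.card F ^ (finrank F ↥(U ⊓ V) + j)) := by
  set W' : Submodule F ↥V := U.comap V.subtype with hW'
  have hker : LinearMap.ker (Submodule.mapQ W' U V.subtype (fun x hx => hx)) = ⊥ := by
    rw [Submodule.mapQ, Submodule.ker_liftQ]
    have : LinearMap.ker (U.mkQ.comp V.subtype) = W' := by
      ext x
      simp [LinearMap.mem_ker, Submodule.Quotient.mk_eq_zero, hW', Submodule.mem_comap]
    rw [this]
    ext x
    simp only [Submodule.mem_map, Submodule.mem_bot]
    constructor
    · rintro ⟨y, hy, rfl⟩
      exact (Submodule.Quotient.mk_eq_zero _).2 hy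
    · rintro rfl
      exact ⟨0, zero_mem _, map_zero _⟩
  have key : ∀ z' : Fin k → ↥V,
      LinearIndependent F (W'.mkQ ∘ z') ↔
        LinearIndependent F (U.mkQ ∘ (fun j => (z' j : E))) := by
    intro z'
    rw [← LinearMap.linearIndependent_iff (Submodule.mapQ W' U V.subtype (fun x hx => hx)) hker]
    have hfun : (⇑(W'.mapQ U V.subtype (fun x hx => hx)) ∘ ⇑W'.mkQ ∘ z')
        = (⇑U.mkQ ∘ fun j => ((z' j : E))) := by
      funext j
      simp [Function.comp, Submodule.mapQ_apply, Submodule.mkQ_apply]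
    rw [hfun]
  have e : {z : Fin k → E // (∀ j, z j ∈ V) ∧ LinearIndependent F (U.mkQ ∘ z)} ≃
      {z' : Fin k → ↥V // LinearIndependent F (W'.mkQ ∘ z')} := by
    refine ⟨fun z => ⟨fun j => ⟨z.1 j, z.2.1 j⟩, ?_⟩,
      fun z' => ⟨fun j => (z'.1 j : E), fun j => (z'.1 j).2, ?_⟩, ?_, ?_⟩
    · exact (key _).2 z.2.2
    · exact (key _).1 z'.2
    · intro z; exact Subtype.ext rfl
    · intro z'; exact Subtype.ext rfl
  rw [Nat.card_congr e, card_li_mkQ]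
  have h1 : finrank F ↥W' = finrank F ↥(U ⊓ V) := by
    have : W' = (U ⊓ V).comap V.subtype := by
      ext x; simp [hW', Submodule.mem_comap, x.2]
    rw [this]
    exact (Submodule.comapSubtypeEquivOfLe inf_le_right).finrank_eq
  rw [h1]



lemma card_mem_li (Wb : Submodule F E) (k : ℕ) :
    Nat.card {y : Fin k → E // (∀ j, y j ∈ Wb) ∧ LinearIndependent F y} =
      ∏ j ∈ range k, (Fintype.card F ^ finrank F Wb - Fintype.card F ^ j) := by
  rw [Nat.card_congr (Equiv.subtypeEquivRight (fun y => and_congr_right (fun _ =>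
    (LinearMap.linearIndependent_iff ((⊥ : Submodule F E)).mkQ (Submodule.ker_mkQ ⊥)).symm)))]
  rw [card_li_mem_mkQ ⊥ Wb k, bot_inf_eq]
  simp [finrank_bot]

lemma dim_phi (U : Submodule F E) {i m : ℕ}
    (y : Fin i → E) (hyU : ∀ j, y j ∈ U) (hyLI : LinearIndependent F y)
    (z : Fin m → E) (hzLI : LinearIndependent F (U.mkQ ∘ z)) :
    finrank F ↥(span F (Set.range y) ⊔ span F (Set.range z)) = m + i ∧
    U ⊓ (span F (Set.range y) ⊔ span F (Set.range z)) = span F (Set.range y) := by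
  set Y := span F (Set.range y) with hY
  set Z := span F (Set.range z) with hZ
  have hYU : Y ≤ U := Submodule.span_le.2 (Set.range_subset_iff.2 hyU)
  have hmap : Z.map U.mkQ = span F (Set.range (U.mkQ ∘ z)) := by
    rw [Submodule.map_span, Set.range_comp]
  have hZdim : finrank F Z = m := by
    rw [hZ, finrank_span_eq_card (LinearIndependent.of_comp U.mkQ hzLI), Fintype.card_fin]
  have hSdim : finrank F (span F (Set.range (⇑U.mkQ ∘ z))) = m := by
    rw [finrank_span_eq_card hzLI, Fintype.card_fin]
  have hUZ : U ⊓ Z = ⊥ := by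
    have h := finrank_eq_map_add U.mkQ Z
    rw [Submodule.ker_mkQ, hmap, hSdim, hZdim] at h
    exact Submodule.finrank_eq_zero.1 (by omega)
  have hinter : U ⊓ (Y ⊔ Z) = Y := by
    rw [inf_comm, sup_inf_assoc_of_le _ hYU, inf_comm, hUZ, sup_bot_eq]
  have hYdim : finrank F Y = i := by
    rw [hY, finrank_span_eq_card hyLI, Fintype.card_fin]
  have hmapΦ : (Y ⊔ Z).map U.mkQ = span F (Set.range (U.mkQ ∘ z)) := by
    rw [Submodule.map_sup, hmap]
    have hYmap : Y.map U.mkQ = ⊥ := le_bot_iff.1 (Submodule.map_le_iff_le_comap.2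
      (by rw [Submodule.comap_bot, Submodule.ker_mkQ]; exact hYU))
    rw [hYmap, bot_sup_eq]
  have hΦdim : finrank F ↥(Y ⊔ Z) = m + i := by
    have h := finrank_eq_map_add U.mkQ (Y ⊔ Z)
    rw [Submodule.ker_mkQ, hmapΦ, hSdim, hinter, hYdim] at h
    exact h
  exact ⟨hΦdim, hinter⟩



lemma card_fiber (U V0 : Submodule F E) (v i : ℕ) (hiv : i ≤ v)
    (hV1 : finrank F V0 = v) (hV2 : finrank F ↥(U ⊓ V0) = i) :
    Nat.card {a : {y : Fin i → E // (∀ j, y j ∈ U) ∧ LinearIndependent F y} ×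
        {z : Fin (v - i) → E // LinearIndependent F (U.mkQ ∘ z)} //
        span F (Set.range a.1.1) ⊔ span F (Set.range a.2.1) = V0} =
      (∏ j ∈ range i, (Fintype.card F ^ i - Fintype.card F ^ j)) *
      (∏ j ∈ range (v - i), (Fintype.card F ^ v - Fintype.card F ^ (i + j))) := by
  classical
  have key : ∀ (y : Fin i → E) (hyU : ∀ j, y j ∈ U) (hyLI : LinearIndependent F y)
      (z : Fin (v - i) → E) (hzLI : LinearIndependent F (U.mkQ ∘ z)),
      span F (Set.range y) ⊔ span F (Set.range z) = V0 ↔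
        ((∀ j, y j ∈ U ⊓ V0) ∧ (∀ j, z j ∈ V0)) := by
    intro y hyU hyLI z hzLI
    constructor
    · intro h
      constructor
      · intro j
        exact ⟨hyU j, h ▸ le_sup_left (α := Submodule F E)
          (Submodule.subset_span (Set.mem_range_self j))⟩
      · intro j
        exact h ▸ le_sup_right (α := Submodule F E)
          (Submodule.subset_span (Set.mem_range_self j))
    · rintro ⟨hyV, hzV⟩
      have hYeq : span F (Set.range y) = U ⊓ V0 := by
        apply Submodule.eq_of_le_of_finrank_eq
        · exact Submodule.span_le.2 (Set.range_subset_iff.2 hyV)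
        · rw [finrank_span_eq_card hyLI, Fintype.card_fin, hV2]
      apply Submodule.eq_of_le_of_finrank_eq
      · exact sup_le (hYeq ▸ inf_le_right)
          (Submodule.span_le.2 (Set.range_subset_iff.2 hzV))
      · rw [(dim_phi U y hyU hyLI z hzLI).1, hV1]
        omega
  have e : {a : {y : Fin i → E // (∀ j, y j ∈ U) ∧ LinearIndependent F y} ×
        {z : Fin (v - i) → E // LinearIndependent F (U.mkQ ∘ z)} //
        span F (Set.range a.1.1) ⊔ span F (Set.range a.2.1) = V0} ≃
      {y : Fin i → E // (∀ j, y j ∈ U ⊓ V0) ∧ LinearIndependent F y} ×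
      {z : Fin (v - i) → E // (∀ j, z j ∈ V0) ∧ LinearIndependent F (U.mkQ ∘ z)} := by
    refine ⟨fun p => (⟨p.1.1.1, fun j => ?_, p.1.1.2.2⟩, ⟨p.1.2.1, fun j => ?_, p.1.2.2⟩),
      fun q => ⟨(⟨q.1.1, fun j => (q.1.2.1 j).1, q.1.2.2⟩, ⟨q.2.1, q.2.2.2⟩), ?_⟩, ?_, ?_⟩
    · exact ((key p.1.1.1 p.1.1.2.1 p.1.1.2.2 p.1.2.1 p.1.2.2).1 p.2).1 j
    · exact ((key p.1.1.1 p.1.1.2.1 p.1.1.2.2 p.1.2.1 p.1.2.2).1 p.2).2 j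
    · exact (key q.1.1 (fun j => (q.1.2.1 j).1) q.1.2.2 q.2.1 q.2.2.2).2
        ⟨q.1.2.1, q.2.2.1⟩
    · intro p
      apply Subtype.ext
      exact Prod.ext (Subtype.ext rfl) (Subtype.ext rfl)
    · intro q
      exact Prod.ext (Subtype.ext rfl) (Subtype.ext rfl)
  rw [Nat.card_congr e, Nat.card_prod, card_mem_li, card_li_mem_mkQ, hV1, hV2]



lemma card_S (U : Submodule F E) (v i : ℕ) (hiv : i ≤ v) :
    Nat.card {V : Submodule F E // finrank F V = v ∧ finrank F ↥(U ⊓ V) = i} *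
      ((∏ j ∈ range i, (Fintype.card F ^ i - Fintype.card F ^ j)) *
       (∏ j ∈ range (v - i), (Fintype.card F ^ v - Fintype.card F ^ (i + j)))) =
    (∏ j ∈ range i, (Fintype.card F ^ finrank F U - Fintype.card F ^ j)) *
      (∏ j ∈ range (v - i), (Fintype.card F ^ finrank F E -
        Fintype.card F ^ (finrank F U + j))) := by
  classical
  set A := {y : Fin i → E // (∀ j, y j ∈ U) ∧ LinearIndependent F y} ×
           {z : Fin (v - i) → E // LinearIndependent F (U.mkQ ∘ z)} with hA
  have hFinE : Finite (Submodule F E) := by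
    exact Finite.of_injective (fun p => (p : Set E)) fun a b h => SetLike.coe_injective h
  -- card A computed directly
  have hcardA : Nat.card A =
      (∏ j ∈ range i, (Fintype.card F ^ finrank F U - Fintype.card F ^ j)) *
      (∏ j ∈ range (v - i), (Fintype.card F ^ finrank F E -
        Fintype.card F ^ (finrank F U + j))) := by
    rw [Nat.card_prod, card_mem_li]
    congr 1
    rw [Nat.card_congr (Equiv.subtypeEquivRight (fun z : Fin (v-i) → E =>
      (and_iff_right (fun j : Fin (v-i) => (Submodule.mem_top : z j ∈ (⊤ : Submodule F E)))).symm))]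
    rw [card_li_mem_mkQ U ⊤ (v - i), finrank_top, inf_top_eq]
  have hΦ : ∀ a : A, finrank F ↥(span F (Set.range a.1.1) ⊔ span F (Set.range a.2.1)) = v ∧
      finrank F ↥(U ⊓ (span F (Set.range a.1.1) ⊔ span F (Set.range a.2.1))) = i := by
    rintro ⟨⟨y, hyU, hyLI⟩, ⟨z, hzLI⟩⟩
    obtain ⟨h1, h2⟩ := dim_phi U y hyU hyLI z hzLI
    refine ⟨by rw [h1]; omega, by rw [h2, finrank_span_eq_card hyLI, Fintype.card_fin]⟩
  set S := {V : Submodule F E // finrank F V = v ∧ finrank F ↥(U ⊓ V) = i} with hS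
  letI : Fintype S := Fintype.ofFinite S
  set f : A → S := fun a => ⟨span F (Set.range a.1.1) ⊔ span F (Set.range a.2.1), hΦ a⟩ with hf
  have hsig : Nat.card A = ∑ V : S, Nat.card {a : A // f a = V} := by
    rw [← my_card_sigma (fun V : S => {a : A // f a = V})]
    exact Nat.card_congr (Equiv.sigmaFiberEquiv f).symm
  have hfib : ∀ V : S, Nat.card {a : A // f a = V} =
      (∏ j ∈ range i, (Fintype.card F ^ i - Fintype.card F ^ j)) *
      (∏ j ∈ range (v - i), (Fintype.card F ^ v - Fintype.card F ^ (i + j))) := by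
    intro V
    have hiff : ∀ a : A, (f a = V) ↔
        (span F (Set.range a.1.1) ⊔ span F (Set.range a.2.1) = V.1) :=
      fun a => Subtype.ext_iff
    rw [Nat.card_congr (Equiv.subtypeEquivRight hiff)]
    exact card_fiber U V.1 v i hiv V.2.1 V.2.2
  rw [hsig, Finset.sum_congr rfl (fun V _ => hfib V), Finset.sum_const, Finset.card_univ,
    smul_eq_mul] at hcardA
  have hNF : Nat.card S = Fintype.card S := Nat.card_eq_fintype_card
  rw [hNF]
  exact hcardA



lemma gaussBinom_nat (q : ℚ) (a b : ℕ) (h : b ≤ a) :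
    gaussBinom q a b = ∏ j ∈ range b, (q ^ (a - j) - 1) / (q ^ (b - j) - 1) := by
  rw [gaussBinom, if_pos ⟨Int.ofNat_nonneg b, by exact_mod_cast h⟩]
  rw [Int.toNat_natCast]
  refine Finset.prod_congr rfl fun j hj => ?_
  rw [Int.toNat_sub a j, Int.toNat_sub b j]

lemma cast_prod_sub (q k : ℕ) (hq : 1 ≤ q) (f g : ℕ → ℕ) (h : ∀ j, j < k → f j ≤ g j) :
    ((∏ j ∈ range k, (q ^ g j - q ^ f j) : ℕ) : ℚ) =
      ∏ j ∈ range k, ((q:ℚ) ^ g j - (q:ℚ) ^ f j) := by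
  rw [Nat.cast_prod]
  refine Finset.prod_congr rfl fun j hj => ?_
  rw [Nat.cast_sub (Nat.pow_le_pow_right hq (h j (Finset.mem_range.1 hj)))]
  push_cast
  ring

lemma alg_step (q ℓ u v i : ℕ) (hq : 1 < q) (hu : u ≤ ℓ) (hiu : i ≤ u) (hiv : i ≤ v)
    (N : ℕ)
    (hEq : N * ((∏ j ∈ range i, (q ^ i - q ^ j)) *
        (∏ j ∈ range (v - i), (q ^ v - q ^ (i + j)))) =
      (∏ j ∈ range i, (q ^ u - q ^ j)) *
        (∏ j ∈ range (v - i), (q ^ ℓ - q ^ (u + j)))) :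
    (N : ℚ) = gaussBinom q ((ℓ : ℤ) - u) ((v : ℤ) - i) * gaussBinom q u i *
      (q : ℚ) ^ ((u - i) * (v - i)) := by
  have hq1 : (1:ℚ) < (q:ℚ) := by exact_mod_cast hq
  have hq0 : (0:ℚ) < (q:ℚ) := lt_trans one_pos hq1
  by_cases hcase : u + (v - i) ≤ ℓ
  · have hgb1 : gaussBinom (q:ℚ) (u:ℤ) (i:ℤ) =
        ∏ j ∈ range i, ((q:ℚ) ^ (u - j) - 1) / ((q:ℚ) ^ (i - j) - 1) :=
      gaussBinom_nat _ _ _ hiu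
    have hℓu : ((ℓ:ℤ) - u) = ((ℓ - u : ℕ) : ℤ) := by omega
    have hvi : ((v:ℤ) - i) = ((v - i : ℕ) : ℤ) := by omega
    have hgb2 : gaussBinom (q:ℚ) ((ℓ:ℤ) - u) ((v:ℤ) - i) =
        ∏ j ∈ range (v - i), ((q:ℚ) ^ (ℓ - u - j) - 1) / ((q:ℚ) ^ (v - i - j) - 1) := by
      rw [hℓu, hvi]
      exact gaussBinom_nat _ _ _ (by omega)
    have hcast := congrArg (Nat.cast : ℕ → ℚ) hEq
    rw [Nat.cast_mul, Nat.cast_mul, Nat.cast_mul,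
      cast_prod_sub q i hq.le _ _ (fun j hj => hj.le),
      cast_prod_sub q (v - i) hq.le _ _ (fun j hj => by omega),
      cast_prod_sub q i hq.le _ _ (fun j hj => by omega),
      cast_prod_sub q (v - i) hq.le _ _ (fun j hj => by omega)] at hcast
    set Q1 := ∏ j ∈ range i, ((q:ℚ) ^ i - (q:ℚ) ^ j) with hQ1
    set Q2 := ∏ j ∈ range (v - i), ((q:ℚ) ^ v - (q:ℚ) ^ (i + j)) with hQ2
    have hne1 : Q1 ≠ 0 := ne_of_gt (Finset.prod_pos (fun j hj =>
      sub_pos.2 (pow_lt_pow_right₀ hq1 (Finset.mem_range.1 hj))))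
    have hne2 : Q2 ≠ 0 := ne_of_gt (Finset.prod_pos (fun j hj =>
      sub_pos.2 (pow_lt_pow_right₀ hq1 (by have := Finset.mem_range.1 hj; omega))))
    have key1 : (∏ j ∈ range i, ((q:ℚ) ^ u - (q:ℚ) ^ j)) =
        (∏ j ∈ range i, ((q:ℚ) ^ (u - j) - 1) / ((q:ℚ) ^ (i - j) - 1)) * Q1 := by
      rw [hQ1, ← Finset.prod_mul_distrib]
      refine Finset.prod_congr rfl fun j hj => ?_
      have hj' := Finset.mem_range.1 hj
      have e1 : (q:ℚ) ^ i - (q:ℚ) ^ j = (q:ℚ) ^ j * ((q:ℚ) ^ (i - j) - 1) := by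
        rw [mul_sub, mul_one, ← pow_add]
        congr 2
        omega
      have e2 : (q:ℚ) ^ u - (q:ℚ) ^ j = (q:ℚ) ^ j * ((q:ℚ) ^ (u - j) - 1) := by
        rw [mul_sub, mul_one, ← pow_add]
        congr 2
        omega
      have hd : (q:ℚ) ^ (i - j) - 1 ≠ 0 := by
        have : (1:ℚ) < (q:ℚ) ^ (i - j) := one_lt_pow₀ hq1 (by omega)
        linarith
      rw [e1, e2]
      field_simp
    have key2 : (∏ j ∈ range (v - i), ((q:ℚ) ^ ℓ - (q:ℚ) ^ (u + j))) =
        (q:ℚ) ^ ((u - i) * (v - i)) *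
          ((∏ j ∈ range (v - i), ((q:ℚ) ^ (ℓ - u - j) - 1) / ((q:ℚ) ^ (v - i - j) - 1)) * Q2) := by
      have h0 : ∀ j ∈ range (v - i), ((q:ℚ) ^ ℓ - (q:ℚ) ^ (u + j)) =
          ((q:ℚ) ^ (u - i)) * (((q:ℚ) ^ (ℓ - u - j) - 1) / ((q:ℚ) ^ (v - i - j) - 1) *
            ((q:ℚ) ^ v - (q:ℚ) ^ (i + j))) := ?_
      · rw [Finset.prod_congr rfl h0, Finset.prod_mul_distrib, Finset.prod_const,
          Finset.card_range, ← pow_mul, Finset.prod_mul_distrib, hQ2]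
      intro j hj
      have hj' := Finset.mem_range.1 hj
      have e1 : (q:ℚ) ^ ℓ - (q:ℚ) ^ (u + j) = (q:ℚ) ^ (u + j) * ((q:ℚ) ^ (ℓ - u - j) - 1) := by
        rw [mul_sub, mul_one, ← pow_add]
        congr 2
        omega
      have e2 : (q:ℚ) ^ v - (q:ℚ) ^ (i + j) = (q:ℚ) ^ (i + j) * ((q:ℚ) ^ (v - i - j) - 1) := by
        rw [mul_sub, mul_one, ← pow_add]
        congr 2
        omega
      have e3 : (q:ℚ) ^ (u - i) * (q:ℚ) ^ (i + j) = (q:ℚ) ^ (u + j) := by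
        rw [← pow_add]
        congr 1
        omega
      have hd : (q:ℚ) ^ (v - i - j) - 1 ≠ 0 := by
        have : (1:ℚ) < (q:ℚ) ^ (v - i - j) := one_lt_pow₀ hq1 (by omega)
        linarith
      rw [e1, e2, ← e3]
      field_simp
    rw [hgb1, hgb2]
    refine mul_right_cancel₀ (mul_ne_zero hne1 hne2) ?_
    rw [hcast, key1, key2]
    ring
  · have hgb2 : gaussBinom (q:ℚ) ((ℓ:ℤ) - u) ((v:ℤ) - i) = 0 := by
      rw [gaussBinom, if_neg]
      rintro ⟨h1, h2⟩
      omega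
    have hP4 : (∏ j ∈ range (v - i), (q ^ ℓ - q ^ (u + j))) = 0 := by
      apply Finset.prod_eq_zero (i := ℓ - u) (Finset.mem_range.2 (by omega))
      have h5 : u + (ℓ - u) = ℓ := by omega
      rw [h5, Nat.sub_self]
    have hN : N = 0 := by
      rw [hP4, mul_zero] at hEq
      have hpos1 : 0 < ∏ j ∈ range i, (q ^ i - q ^ j) :=
        Finset.prod_pos (fun j hj => Nat.sub_pos_of_lt
          (Nat.pow_lt_pow_right hq (Finset.mem_range.1 hj)))
      have hpos2 : 0 < ∏ j ∈ range (v - i), (q ^ v - q ^ (i + j)) :=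
        Finset.prod_pos (fun j hj => Nat.sub_pos_of_lt
          (Nat.pow_lt_pow_right hq (by have := Finset.mem_range.1 hj; omega)))
      rcases Nat.mul_eq_zero.1 hEq with h | h
      · exact h
      · exact absurd h (Nat.mul_ne_zero hpos1.ne' hpos2.ne')
    rw [hN, hgb2]
    simp

/-- The number of `v`-dimensional subspaces `V` of `F_q^ℓ` with `dim(U ∩ V) ≥ ω` equals
`Σ_{i=ω}^{min{u,v}} [ℓ−u, v−i]_q · [u, i]_q · q^{(u−i)(v−i)}`. -/
theorem stmt0 (q ℓ u v ω : ℕ) (F : Type) [Field F] [Fintype F]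
    (hcard : Fintype.card F = q)
    (hu : u ≤ ℓ) (hv : v ≤ ℓ) (hω : ω ≤ min u v)
    (U : Submodule F (Fin ℓ → F)) (hU : Module.finrank F U = u) :
    (Nat.card {V : Submodule F (Fin ℓ → F) //
        Module.finrank F V = v ∧ ω ≤ Module.finrank F ↥(U ⊓ V)} : ℚ)
      = ∑ i ∈ Finset.Icc ω (min u v),
          gaussBinom q ((ℓ : ℤ) - u) ((v : ℤ) - i) * gaussBinom q u i
            * (q : ℚ) ^ ((u - i) * (v - i)) := by
  classical
  subst hcard
  have hq : 1 < Fintype.card F := Fintype.one_lt_card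
  set E := Fin ℓ → F with hE
  have hn : finrank F E = ℓ := Module.finrank_fin_fun F
  haveI : Finite (Submodule F E) :=
    Finite.of_injective (fun p => (p : Set E)) fun a b h => SetLike.coe_injective h
  set T := {V : Submodule F E // finrank F V = v ∧ ω ≤ finrank F ↥(U ⊓ V)} with hT
  have hmem : ∀ V : T, finrank F ↥(U ⊓ V.1) ∈ Finset.Icc ω (min u v) := by
    intro V
    rw [Finset.mem_Icc]
    refine ⟨V.2.2, le_min ?_ ?_⟩
    · rw [← hU]
      exact Submodule.finrank_mono inf_le_left
    · exact le_of_le_of_eq (Submodule.finrank_mono inf_le_right) V.2.1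
  set g : T → ↥(Finset.Icc ω (min u v)) := fun V => ⟨finrank F ↥(U ⊓ V.1), hmem V⟩ with hg
  have hsig : Nat.card T = ∑ i : ↥(Finset.Icc ω (min u v)), Nat.card {V : T // g V = i} := by
    rw [← my_card_sigma (fun i : ↥(Finset.Icc ω (min u v)) => {V : T // g V = i})]
    exact Nat.card_congr (Equiv.sigmaFiberEquiv g).symm
  have hfibeq : ∀ i : ↥(Finset.Icc ω (min u v)), Nat.card {V : T // g V = i} =
      Nat.card {V : Submodule F E // finrank F V = v ∧ finrank F ↥(U ⊓ V) = i.1} := by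
    intro i
    refine Nat.card_congr ⟨fun p => ⟨p.1.1, p.1.2.1, congrArg Subtype.val p.2⟩,
      fun W => ⟨⟨W.1, W.2.1, ?_⟩, Subtype.ext W.2.2⟩, fun p => ?_, fun W => ?_⟩
    · rw [W.2.2]
      exact (Finset.mem_Icc.1 i.2).1
    · apply Subtype.ext
      apply Subtype.ext
      rfl
    · apply Subtype.ext
      rfl
  rw [hsig]
  push_cast
  rw [Finset.sum_congr rfl (fun i _ => congrArg (Nat.cast : ℕ → ℚ) (hfibeq i))]
  rw [Finset.sum_coe_sort (Finset.Icc ω (min u v))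
    (fun i => (Nat.card {V : Submodule F E // finrank F V = v ∧ finrank F ↥(U ⊓ V) = i} : ℚ))]
  refine Finset.sum_congr rfl fun i hi => ?_
  have hi' := Finset.mem_Icc.1 hi
  have hiu : i ≤ u := hi'.2.trans (min_le_left u v)
  have hiv : i ≤ v := hi'.2.trans (min_le_right u v)
  have hEqN := card_S U v i hiv
  rw [hU, hn] at hEqN
  exact alg_step (Fintype.card F) ℓ u v i hq hu hiu hiv _ hEqN
end

section
/- Let q be a prime power, let ℓ, u, v, ω be integers with 0 ≤ u ≤ ℓ, 0 ≤ v ≤ ℓ and 0 ≤ ω ≤ min{u,v}, and let U be a fixed u-dimensional F_q-subspace of F_q^ℓ. If V is chosen uniformly at random from the set of all v-dimensional F_q-subspaces of F_q^ℓ, then Pr[dim(U ∩ V) ≥ ω], i.e. the ratio (number of v-dimensional subspaces V with dim(U ∩ V) ≥ ω)/[ℓ, v]_q, is at most 16 · (min{u,v} + 1 − ω) · q^{(j* − v)(ℓ − u − j*)}, where j* := min{v − ω, (ℓ + v − u)/2} (a real number). -/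
section Aux
open Module Submodule

lemma prodlb (q : ℝ) (hq : 2 ≤ q) (k : ℕ) :
    (1/4 : ℝ) ≤ ∏ j ∈ Finset.range k, (1 - q⁻¹ ^ (j+1)) := by
  have hq0 : (0:ℝ) < q := by linarith
  have h2 : (0:ℝ) < q⁻¹ := by positivity
  have h3 : q⁻¹ ≤ 1/2 := by rw [inv_le_iff_one_le_mul₀ hq0]; linarith
  have key : ∀ k : ℕ, 1 ≤ k → (1/4 : ℝ) + (1/2) * q⁻¹ ^ k ≤ ∏ j ∈ Finset.range k, (1 - q⁻¹ ^ (j+1)) := by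
    intro k hk
    induction k with
    | zero => omega
    | succ n ih =>
      rcases Nat.eq_or_lt_of_le hk with h1 | h1
      · simp [← h1, Finset.prod_range_one]
        nlinarith
      · have hn : 1 ≤ n := by omega
        have ihn := ih hn
        rw [Finset.prod_range_succ]
        have h4 : q⁻¹ ^ n ≤ q⁻¹ := by
          calc q⁻¹ ^ n ≤ q⁻¹ ^ 1 := pow_le_pow_of_le_one h2.le (by linarith) hn
           _ = q⁻¹ := pow_one _
        have h5 : (0:ℝ) < 1 - q⁻¹ ^ (n+1) := by
          have : q⁻¹ ^ (n+1) ≤ q⁻¹ := by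
            calc q⁻¹ ^ (n+1) ≤ q⁻¹ ^ 1 := pow_le_pow_of_le_one h2.le (by linarith) (by omega)
             _ = q⁻¹ := pow_one _
          linarith
        have hx0 : (0:ℝ) ≤ q⁻¹ ^ n := by positivity
        calc (1/4 : ℝ) + (1/2) * q⁻¹ ^ (n+1)
            ≤ ((1/4) + (1/2) * q⁻¹ ^ n) * (1 - q⁻¹ ^ (n+1)) := by
              rw [pow_succ]
              have key2 : 3/4*q⁻¹ + 1/2*(q⁻¹^n*q⁻¹) ≤ 1/2 := by nlinarith
              nlinarith [mul_nonneg hx0 (by linarith : (0:ℝ) ≤ 1/2 - 3/4*q⁻¹ - 1/2*(q⁻¹^n*q⁻¹))]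
          _ ≤ (∏ j ∈ Finset.range n, (1 - q⁻¹ ^ (j+1))) * (1 - q⁻¹ ^ (n+1)) :=
              mul_le_mul_of_nonneg_right ihn (le_of_lt h5)
  rcases Nat.eq_zero_or_pos k with rfl | hk
  · norm_num
  · have h6 := key k hk
    have h7 : (0:ℝ) ≤ (1/2) * q⁻¹ ^ k := by positivity
    linarith

lemma qprodlb (q : ℝ) (hq : 2 ≤ q) {k n : ℕ} (hk : k ≤ n) :
    q ^ (n*k) ≤ 4 * ∏ i ∈ Finset.range k, (q ^ n - q ^ i) := by
  have hq0 : (0:ℝ) < q := by linarith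
  have h2 : (0:ℝ) < q⁻¹ := by positivity
  have h3 : q⁻¹ ≤ 1 := by rw [inv_le_one_iff₀]; right; linarith
  have hsplit : ∀ i ∈ Finset.range k, q ^ n - q ^ i = q ^ n * (1 - q⁻¹ ^ (n - i)) := by
    intro i hi
    have hin : i ≤ n := le_trans (Finset.mem_range.1 hi).le hk
    have : q ^ n * q⁻¹ ^ (n - i) = q ^ i := by
      rw [inv_pow, ← div_eq_mul_inv, div_eq_iff (by positivity), ← pow_add]
      congr 1; omega
    rw [mul_sub, mul_one, this]
  rw [Finset.prod_congr rfl hsplit, Finset.prod_mul_distrib, Finset.prod_const,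
    ← pow_mul, Finset.card_range]
  have hre : ∏ i ∈ Finset.range k, (1 - q⁻¹ ^ (n - i))
      = ∏ i ∈ Finset.range k, (1 - q⁻¹ ^ (n - (k - 1 - i))) :=
    (Finset.prod_range_reflect (fun i => (1 - q⁻¹ ^ (n - i))) k).symm
  have hbd : (1/4 : ℝ) ≤ ∏ i ∈ Finset.range k, (1 - q⁻¹ ^ (n - i)) := by
    rw [hre]
    calc (1/4 : ℝ) ≤ ∏ j ∈ Finset.range k, (1 - q⁻¹ ^ (j+1)) := prodlb q hq k
      _ ≤ ∏ i ∈ Finset.range k, (1 - q⁻¹ ^ (n - (k - 1 - i))) := by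
          apply Finset.prod_le_prod
          · intro i hi
            have : q⁻¹ ^ (i+1) ≤ q⁻¹ ^ 1 := pow_le_pow_of_le_one h2.le h3 (by omega)
            have h4 : q⁻¹ ≤ 1/2 := by rw [inv_le_iff_one_le_mul₀ hq0]; linarith
            simp only [pow_one] at this; linarith
          · intro i hi
            have hle : i + 1 ≤ n - (k - 1 - i) := by
              have := Finset.mem_range.1 hi; omega
            have := pow_le_pow_of_le_one h2.le h3 hle
            linarith
  nlinarith [pow_pos hq0 (n*k)]

section ME

variable {K V : Type*} [Field K] [AddCommGroup V] [Module K V]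

noncomputable def modEquiv (P : Submodule K V) (m : ℕ) :
    {h : Fin m → V // LinearIndependent K (P.mkQ ∘ h)} ≃
      {k : Fin m → V ⧸ P // LinearIndependent K k} × (Fin m → P) :=
  let s := (P.mkQ.exists_rightInverse_of_surjective (Submodule.range_mkQ P)).choose
  have hs : P.mkQ ∘ₗ s = LinearMap.id :=
    (P.mkQ.exists_rightInverse_of_surjective (Submodule.range_mkQ P)).choose_spec
  have hsk : ∀ x : V ⧸ P, P.mkQ (s x) = x := fun x => LinearMap.congr_fun hs x
  {
    toFun := fun h => (⟨P.mkQ ∘ h.1, h.2⟩,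
      fun i => ⟨h.1 i - s (P.mkQ (h.1 i)), by
        rw [← Submodule.Quotient.mk_eq_zero, ← Submodule.mkQ_apply, map_sub, hsk, sub_self]⟩)
    invFun := fun kw => ⟨fun i => s (kw.1.1 i) + (kw.2 i : V), by
      have : P.mkQ ∘ (fun i => s (kw.1.1 i) + (kw.2 i : V)) = kw.1.1 := by
        funext i
        simp only [Function.comp_apply, map_add, hsk]
        rw [show P.mkQ (kw.2 i : V) = 0 by
          rw [Submodule.mkQ_apply, Submodule.Quotient.mk_eq_zero]; exact (kw.2 i).2]
        simp
      rw [this]; exact kw.1.2⟩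
    left_inv := fun h => by
      apply Subtype.ext; funext i; simp
    right_inv := fun kw => by
      refine Prod.ext (Subtype.ext ?_) ?_
      · funext i
        simp only [Function.comp_apply, map_add, hsk]
        rw [show P.mkQ (kw.2 i : V) = 0 by
          rw [Submodule.mkQ_apply, Submodule.Quotient.mk_eq_zero]; exact (kw.2 i).2]
        simp
      · funext i
        apply Subtype.ext
        simp only [map_add, hsk]
        rw [show P.mkQ (kw.2 i : V) = 0 by
          rw [Submodule.mkQ_apply, Submodule.Quotient.mk_eq_zero]; exact (kw.2 i).2]
        simp }

lemma card_indep_mod [Fintype K] [Finite V] (P : Submodule K V) {m : ℕ}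
    (hm : m ≤ finrank K (V ⧸ P)) :
    Nat.card {h : Fin m → V // LinearIndependent K (P.mkQ ∘ h)} =
      (∏ i : Fin m, (Fintype.card K ^ finrank K (V ⧸ P) - Fintype.card K ^ (i : ℕ)))
        * (Nat.card P) ^ m := by
  have : Finite (V ⧸ P) := Quotient.finite _
  rw [Nat.card_congr (modEquiv P m), Nat.card_prod, card_linearIndependent hm,
    Nat.card_fun]
  simp

end ME

set_option synthInstance.maxHeartbeats 1000000 in
set_option maxHeartbeats 1000000 in
lemma count_bound (q ℓ u v ω : ℕ) (F : Type) [Field F] [Fintype F]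
    (hcard : Fintype.card F = q)
    (hωu : ω ≤ u) (hωv : ω ≤ v)
    (U : Submodule F (Fin ℓ → F)) (hU : finrank F U = u) :
    Nat.card {V : Submodule F (Fin ℓ → F) //
        finrank F V = v ∧ ω ≤ finrank F ↥(U ⊓ V)} *
      ((∏ i ∈ Finset.range ω, (q ^ ω - q ^ i)) *
        ((∏ i ∈ Finset.range (v - ω), (q ^ (v - ω) - q ^ i)) * q ^ (ω * (v - ω)))) ≤
      q ^ (u * ω) * q ^ (ℓ * (v - ω)) := by
  classical
  set m := v - ω with hm
  set S := {V : Submodule F (Fin ℓ → F) //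
      finrank F V = v ∧ ω ≤ finrank F ↥(U ⊓ V)} with hS
  -- choose W V ≤ U ⊓ V of rank ω
  have hexW : ∀ V : S, ∃ W : Submodule F (Fin ℓ → F), W ≤ U ⊓ V.1 ∧ finrank F W = ω := by
    intro V
    have hd : ω ≤ finrank F ↥(U ⊓ V.1) := V.2.2
    let b := finBasis F ↥(U ⊓ V.1)
    let f : Fin ω → (Fin ℓ → F) := fun i => ((b (Fin.castLE hd i) : ↥(U ⊓ V.1)) : Fin ℓ → F)
    have hfi : LinearIndependent F f := by
      have h1 : LinearIndependent F (fun i : Fin ω => b (Fin.castLE hd i)) :=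
        b.linearIndependent.comp _ (Fin.castLE_injective hd)
      exact h1.map' (U ⊓ V.1).subtype (Submodule.ker_subtype _)
    refine ⟨span F (Set.range f), ?_, ?_⟩
    · rw [span_le]
      rintro x ⟨i, rfl⟩
      exact (b (Fin.castLE hd i)).2
    · rw [finrank_span_eq_card hfi, Fintype.card_fin]
  choose W hWle hWrank using hexW
  -- the fiber type
  let P : (V : S) → Submodule F ↥V.1 := fun V => (W V).comap V.1.subtype
  let Fib : S → Type := fun V =>
    {g : Fin ω → ↥(W V) // LinearIndependent F g} ×
    {h : Fin m → ↥V.1 // LinearIndependent F ((P V).mkQ ∘ h)}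
  -- the combined family spans V
  have hspan : ∀ (V : S) (gh : Fib V),
      V.1 = span F (Set.range (Sum.elim
        (fun i => ((gh.1.1 i : ↥(W V)) : Fin ℓ → F))
        (fun i => ((gh.2.1 i : ↥V.1) : Fin ℓ → F)))) := by
    intro V gh
    have hWV : W V ≤ V.1 := le_trans (hWle V) inf_le_right
    have hker : (P V) = LinearMap.ker ((W V).mkQ ∘ₗ V.1.subtype) := by
      ext x
      simp only [P, Submodule.mem_comap, LinearMap.mem_ker, LinearMap.comp_apply,
        Submodule.subtype_apply, Submodule.mkQ_apply, Submodule.Quotient.mk_eq_zero]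
    have hψinj : LinearMap.ker ((P V).liftQ ((W V).mkQ ∘ₗ V.1.subtype) hker.le) = ⊥ :=
      Submodule.ker_liftQ_eq_bot _ _ _ hker.ge
    have hψ : LinearIndependent F
        ((W V).mkQ ∘ (fun i => ((gh.2.1 i : ↥V.1) : Fin ℓ → F))) := by
      have h1 := gh.2.2.map' ((P V).liftQ ((W V).mkQ ∘ₗ V.1.subtype) hker.le) hψinj
      have h2 : ((P V).liftQ ((W V).mkQ ∘ₗ V.1.subtype) hker.le) ∘ ((P V).mkQ ∘ gh.2.1)
          = (W V).mkQ ∘ (fun i => ((gh.2.1 i : ↥V.1) : Fin ℓ → F)) := by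
        funext i
        simp [Submodule.liftQ_apply]
      rwa [h2] at h1
    have hind : LinearIndependent F (Sum.elim
        (fun i => ((gh.1.1 i : ↥(W V)) : Fin ℓ → F))
        (fun i => ((gh.2.1 i : ↥V.1) : Fin ℓ → F))) :=
      LinearIndependent.sumElim_of_quotient gh.1.2 _ hψ
    have hle : span F (Set.range (Sum.elim
        (fun i => ((gh.1.1 i : ↥(W V)) : Fin ℓ → F))
        (fun i => ((gh.2.1 i : ↥V.1) : Fin ℓ → F)))) ≤ V.1 := by
      rw [span_le]
      rintro x ⟨i, rfl⟩
      rcases i with i | i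
      · exact hWV (gh.1.1 i).2
      · exact (gh.2.1 i).2
    have hrank : finrank F (span F (Set.range (Sum.elim
        (fun i => ((gh.1.1 i : ↥(W V)) : Fin ℓ → F))
        (fun i => ((gh.2.1 i : ↥V.1) : Fin ℓ → F))))) = v := by
      rw [finrank_span_eq_card hind]
      simp only [Fintype.card_sum, Fintype.card_fin]
      omega
    exact (Submodule.eq_of_le_of_finrank_le hle (by rw [hrank, V.2.1])).symm
  -- cardinality of each fiber
  have hfib : ∀ V : S, Nat.card (Fib V) =
      (∏ i ∈ Finset.range ω, (q ^ ω - q ^ i)) *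
        ((∏ i ∈ Finset.range m, (q ^ m - q ^ i)) * q ^ (ω * m)) := by
    intro V
    have hWV : W V ≤ V.1 := le_trans (hWle V) inf_le_right
    have hPrank : finrank F ↥(P V) = ω := by
      rw [(Submodule.comapSubtypeEquivOfLe hWV).finrank_eq, hWrank]
    have hquot : finrank F (↥V.1 ⧸ P V) = m := by
      have h1 := Submodule.finrank_quotient_add_finrank (P V)
      rw [hPrank, V.2.1] at h1
      omega
    have hcardP : Nat.card ↥(P V) = q ^ ω := by
      have := Fintype.ofFinite ↥(P V)
      rw [Nat.card_eq_fintype_card, card_eq_pow_finrank (K := F), hcard, hPrank]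
    have hA : Nat.card {g : Fin ω → ↥(W V) // LinearIndependent F g} =
        ∏ i ∈ Finset.range ω, (q ^ ω - q ^ i) := by
      rw [card_linearIndependent (by rw [hWrank] : ω ≤ finrank F ↥(W V)), hWrank, hcard]
      exact Fin.prod_univ_eq_prod_range (fun i => q ^ ω - q ^ i) ω
    have hB : Nat.card {h : Fin m → ↥V.1 // LinearIndependent F ((P V).mkQ ∘ h)} =
        (∏ i ∈ Finset.range m, (q ^ m - q ^ i)) * q ^ (ω * m) := by
      rw [card_indep_mod (P V) (by rw [hquot]), hquot, hcard, hcardP, ← pow_mul]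
      rw [Fin.prod_univ_eq_prod_range (fun i => q ^ m - q ^ i) m]
    rw [Nat.card_prod, hA, hB]
  -- the injection
  let Φ : (Σ V : S, Fib V) → ((Fin ω → ↥U) × (Fin m → (Fin ℓ → F))) := fun x =>
    (fun i => ⟨((x.2.1.1 i : ↥(W x.1)) : Fin ℓ → F),
        (le_trans (hWle x.1) inf_le_left) (x.2.1.1 i).2⟩,
     fun i => ((x.2.2.1 i : ↥x.1.1) : Fin ℓ → F))
  have hΦ : Function.Injective Φ := by
    rintro ⟨V, gh⟩ ⟨V', gh'⟩ heq
    have h1 : ∀ i, ((gh.1.1 i : ↥(W V)) : Fin ℓ → F) = ((gh'.1.1 i : ↥(W V')) : Fin ℓ → F) := by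
      intro i
      exact congrArg Subtype.val (congrFun (congrArg Prod.fst heq) i)
    have h2 : ∀ i, ((gh.2.1 i : ↥V.1) : Fin ℓ → F) = ((gh'.2.1 i : ↥V'.1) : Fin ℓ → F) := by
      intro i; exact congrFun (congrArg Prod.snd heq) i
    have hcc : (Sum.elim (fun i => ((gh.1.1 i : ↥(W V)) : Fin ℓ → F))
        (fun i => ((gh.2.1 i : ↥V.1) : Fin ℓ → F)))
        = (Sum.elim (fun i => ((gh'.1.1 i : ↥(W V')) : Fin ℓ → F))
        (fun i => ((gh'.2.1 i : ↥V'.1) : Fin ℓ → F))) := by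
      funext i; rcases i with i | i
      · exact h1 i
      · exact h2 i
    have hV : V = V' := by
      apply Subtype.ext
      rw [hspan V gh, hspan V' gh', hcc]
    subst hV
    suffices h : gh = gh' by rw [h]
    refine Prod.ext (Subtype.ext (funext fun i => Subtype.ext (h1 i)))
      (Subtype.ext (funext fun i => Subtype.ext (h2 i)))
  -- put it together
  have hfin : Finite (Submodule F (Fin ℓ → F)) :=
    Finite.of_injective _ (SetLike.coe_injective (A := Submodule F (Fin ℓ → F)))
  have hfinS : Finite S := Subtype.finite
  have hcardsigma : Nat.card (Σ V : S, Fib V) = Nat.card S *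
      ((∏ i ∈ Finset.range ω, (q ^ ω - q ^ i)) *
        ((∏ i ∈ Finset.range m, (q ^ m - q ^ i)) * q ^ (ω * m))) := by
    have hFS := Fintype.ofFinite S
    have hFF : ∀ V : S, Fintype (Fib V) := fun V => Fintype.ofFinite _
    rw [Nat.card_eq_fintype_card, Fintype.card_sigma]
    have : ∀ V : S, Fintype.card (Fib V) =
        (∏ i ∈ Finset.range ω, (q ^ ω - q ^ i)) *
          ((∏ i ∈ Finset.range m, (q ^ m - q ^ i)) * q ^ (ω * m)) := by
      intro V; rw [← Nat.card_eq_fintype_card]; exact hfib V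
    rw [Finset.sum_congr rfl (fun V _ => this V), Finset.sum_const, Finset.card_univ,
      Nat.card_eq_fintype_card]
    simp [mul_comm]
  have htarget : Nat.card ((Fin ω → ↥U) × (Fin m → (Fin ℓ → F))) =
      q ^ (u * ω) * q ^ (ℓ * m) := by
    have hfU := Fintype.ofFinite ↥U
    rw [Nat.card_prod, Nat.card_fun, Nat.card_fun]
    rw [Nat.card_eq_fintype_card (α := ↥U), card_eq_pow_finrank (K := F) (V := ↥U), hU, hcard]
    rw [Nat.card_eq_fintype_card (α := Fin ℓ → F), card_eq_pow_finrank (K := F), hcard]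
    simp [pow_mul, Module.finrank_fintype_fun_eq_card]
  calc Nat.card S * _ = Nat.card (Σ V : S, Fib V) := hcardsigma.symm
    _ ≤ Nat.card ((Fin ω → ↥U) × (Fin m → (Fin ℓ → F))) := Nat.card_le_card_of_injective Φ hΦ
    _ = q ^ (u * ω) * q ^ (ℓ * m) := htarget

lemma gauss_lb (q : ℚ) (hq : 2 ≤ q) {ℓ v : ℕ} (hv : v ≤ ℓ) :
    (q ^ (v * (ℓ - v)) : ℚ) ≤ gaussBinom q ℓ v := by
  have hq0 : (0:ℚ) < q := by linarith
  rw [gaussBinom, if_pos ⟨by positivity, by exact_mod_cast hv⟩]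
  have htn : ((v:ℤ)).toNat = v := Int.toNat_natCast v
  rw [htn]
  calc (q ^ (v * (ℓ - v)) : ℚ) = ∏ _i ∈ Finset.range v, q ^ (ℓ - v) := by
        rw [Finset.prod_const, Finset.card_range, ← pow_mul, mul_comm]
    _ ≤ ∏ i ∈ Finset.range v, (q ^ ((ℓ:ℤ) - i).toNat - 1) / (q ^ ((v:ℤ) - i).toNat - 1) := by
        apply Finset.prod_le_prod
        · intro i _; positivity
        · intro i hi
          have hiv : i < v := Finset.mem_range.1 hi
          have h1 : ((ℓ:ℤ) - i).toNat = ℓ - i := by omega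
          have h2 : ((v:ℤ) - i).toNat = v - i := by omega
          rw [h1, h2]
          have hd : (0:ℚ) < q ^ (v - i) - 1 := by
            have : (2:ℚ) ≤ q ^ (v - i) := by
              calc (2:ℚ) ≤ q := hq
                _ = q ^ 1 := (pow_one q).symm
                _ ≤ q ^ (v - i) := pow_le_pow_right₀ (by linarith) (by omega)
            linarith
          rw [le_div_iff₀ hd]
          have hexp : ℓ - v + (v - i) = ℓ - i := by omega
          have h3 : (1:ℚ) ≤ q ^ (ℓ - v) := one_le_pow₀ (by linarith)
          calc q ^ (ℓ - v) * (q ^ (v - i) - 1) = q ^ (ℓ - i) - q ^ (ℓ - v) := by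
                rw [mul_sub, mul_one, ← pow_add, hexp]
            _ ≤ q ^ (ℓ - i) - 1 := by linarith

end Aux

set_option maxHeartbeats 2000000 in
set_option synthInstance.maxHeartbeats 1000000 in
open Real in
/-- For a fixed `u`-dimensional subspace `U` of `F_q^ℓ` and a uniformly random
`v`-dimensional subspace `V`, the probability that `dim(U ∩ V) ≥ ω`, i.e. the ratio
(number of `v`-dim subspaces `V` with `dim(U ∩ V) ≥ ω`) / `[ℓ, v]_q`, is at most
`16 (min{u,v} + 1 − ω) q^{(j* − v)(ℓ − u − j*)}` where `j* = min{v − ω, (ℓ + v − u)/2}`. -/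
theorem stmt2 (q ℓ u v ω : ℕ) (F : Type) [Field F] [Fintype F]
    (hcard : Fintype.card F = q)
    (hu : u ≤ ℓ) (hv : v ≤ ℓ) (hω : ω ≤ min u v)
    (U : Submodule F (Fin ℓ → F)) (hU : Module.finrank F U = u) :
    (Nat.card {V : Submodule F (Fin ℓ → F) //
        Module.finrank F V = v ∧ ω ≤ Module.finrank F ↥(U ⊓ V)} : ℝ)
        / ((gaussBinom q ℓ v : ℚ) : ℝ)
      ≤ 16 * ((min u v : ℝ) + 1 - ω)
          * (q : ℝ) ^ ((min ((v : ℝ) - ω) (((ℓ : ℝ) + v - u) / 2) - v)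
              * ((ℓ : ℝ) - u - min ((v : ℝ) - ω) (((ℓ : ℝ) + v - u) / 2))) := by
  classical
  have hq2 : 2 ≤ q := by
    have h1 : 1 < q := hcard ▸ Fintype.one_lt_card
    omega
  have hωu : ω ≤ u := le_trans hω (min_le_left _ _)
  have hωv : ω ≤ v := le_trans hω (min_le_right _ _)
  have hqR : (2:ℝ) ≤ (q:ℝ) := by exact_mod_cast hq2
  have hq0 : (0:ℝ) < q := by linarith
  have hq1 : (1:ℝ) < q := by linarith
  have hcount := count_bound q ℓ u v ω F hcard hωu hωv U hU
  set m := v - ω with hmdef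
  set N := Nat.card {V : Submodule F (Fin ℓ → F) //
      Module.finrank F V = v ∧ ω ≤ Module.finrank F ↥(U ⊓ V)} with hN
  have hcastprod : ∀ k : ℕ, ((∏ i ∈ Finset.range k, (q ^ k - q ^ i) : ℕ) : ℝ)
      = ∏ i ∈ Finset.range k, ((q:ℝ) ^ k - (q:ℝ) ^ i) := by
    intro k
    rw [Nat.cast_prod]
    refine Finset.prod_congr rfl fun i hi => ?_
    have h1 : q ^ i ≤ q ^ k := Nat.pow_le_pow_right (by omega) (Finset.mem_range.1 hi).le
    rw [Nat.cast_sub h1]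
    push_cast
    ring
  have hle : (N:ℝ) * (((∏ i ∈ Finset.range ω, (q ^ ω - q ^ i) : ℕ) : ℝ) *
      (((∏ i ∈ Finset.range m, (q ^ m - q ^ i) : ℕ) : ℝ) * (q:ℝ) ^ (ω * m)))
      ≤ (q:ℝ) ^ (u * ω) * (q:ℝ) ^ (ℓ * m) := by exact_mod_cast hcount
  have hA := qprodlb (q:ℝ) hqR (le_refl ω)
  have hB := qprodlb (q:ℝ) hqR (le_refl m)
  rw [← hcastprod ω] at hA
  rw [← hcastprod m] at hB
  have key : (N:ℝ) * ((q:ℝ) ^ (ω*ω + (m*m + ω*m))) ≤ 16 * ((q:ℝ) ^ (u*ω) * (q:ℝ) ^ (ℓ*m)) := by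
    have e1 : (q:ℝ) ^ (ω*ω + (m*m + ω*m)) = (q:ℝ)^(ω*ω) * ((q:ℝ)^(m*m) * (q:ℝ)^(ω*m)) := by
      rw [pow_add, pow_add]
    rw [e1]
    calc (N:ℝ) * ((q:ℝ)^(ω*ω) * ((q:ℝ)^(m*m) * (q:ℝ)^(ω*m)))
        ≤ (N:ℝ) * ((4 * ((∏ i ∈ Finset.range ω, (q ^ ω - q ^ i) : ℕ) : ℝ)) *
            ((4 * ((∏ i ∈ Finset.range m, (q ^ m - q ^ i) : ℕ) : ℝ)) * (q:ℝ)^(ω*m))) := by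
          gcongr
      _ = 16 * ((N:ℝ) * (((∏ i ∈ Finset.range ω, (q ^ ω - q ^ i) : ℕ) : ℝ) *
            (((∏ i ∈ Finset.range m, (q ^ m - q ^ i) : ℕ) : ℝ) * (q:ℝ) ^ (ω * m)))) := by
          ring
      _ ≤ 16 * ((q:ℝ) ^ (u*ω) * (q:ℝ) ^ (ℓ*m)) := by
          have h16 : (0:ℝ) ≤ 16 := by norm_num
          exact mul_le_mul_of_nonneg_left hle h16
  have hNle : (N:ℝ) ≤ 16 * ((q:ℝ)^(u*ω) * (q:ℝ)^(ℓ*m)) / (q:ℝ)^(ω*ω + (m*m + ω*m)) := by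
    rw [le_div_iff₀ (by positivity)]
    exact key
  have hGq : ((q:ℝ))^(v * (ℓ - v)) ≤ ((gaussBinom q ℓ v : ℚ) : ℝ) := by
    have h := gauss_lb (q:ℚ) (by exact_mod_cast hq2) hv
    exact_mod_cast h
  have hG0 : (0:ℝ) < ((gaussBinom q ℓ v : ℚ) : ℝ) := lt_of_lt_of_le (by positivity) hGq
  set X := min ((v : ℝ) - ω) (((ℓ : ℝ) + v - u) / 2) with hX
  have hexp : ((v:ℝ) - ω - v) * ((ℓ:ℝ) - u - ((v:ℝ) - ω)) ≤ (X - v) * ((ℓ:ℝ) - u - X) := by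
    rcases le_total ((v:ℝ) - ω) (((ℓ:ℝ) + v - u)/2) with h | h
    · rw [hX, min_eq_left h]
    · rw [hX, min_eq_right h]
      nlinarith [sq_nonneg ((v:ℝ) - ω - ((ℓ:ℝ) + v - u)/2)]
  have hEE : ((u*ω + ℓ*m : ℕ) : ℝ) - ((ω*ω + (m*m + ω*m) : ℕ) : ℝ) - ((v*(ℓ-v) : ℕ) : ℝ)
      = ((v:ℝ) - ω - v) * ((ℓ:ℝ) - u - ((v:ℝ) - ω)) := by
    rw [hmdef]
    push_cast [Nat.cast_sub hωv, Nat.cast_sub hv]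
    ring
  calc (N:ℝ) / ((gaussBinom q ℓ v : ℚ) : ℝ)
      ≤ (N:ℝ) / (q:ℝ)^(v * (ℓ - v)) := by
        gcongr
    _ ≤ (16 * ((q:ℝ)^(u*ω) * (q:ℝ)^(ℓ*m)) / (q:ℝ)^(ω*ω + (m*m + ω*m))) / (q:ℝ)^(v * (ℓ - v)) := by
        gcongr
    _ = 16 * (q:ℝ) ^ (((u*ω + ℓ*m : ℕ) : ℝ) - ((ω*ω + (m*m + ω*m) : ℕ) : ℝ)
          - ((v*(ℓ-v) : ℕ) : ℝ)) := by
        rw [Real.rpow_sub hq0, Real.rpow_sub hq0, Real.rpow_natCast, Real.rpow_natCast,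
          Real.rpow_natCast, pow_add]
        ring
    _ = 16 * (q:ℝ) ^ (((v:ℝ) - ω - v) * ((ℓ:ℝ) - u - ((v:ℝ) - ω))) := by rw [hEE]
    _ ≤ 16 * (q:ℝ) ^ ((X - v) * ((ℓ:ℝ) - u - X)) := by
        have := (Real.rpow_le_rpow_left_iff hq1).2 hexp
        nlinarith [this]
    _ ≤ 16 * ((min u v : ℝ) + 1 - ω) * (q : ℝ) ^ ((X - v) * ((ℓ:ℝ) - u - X)) := by
        have h1 : (1:ℝ) ≤ (min u v : ℝ) + 1 - ω := by
          have h2 : (ω:ℝ) ≤ ((min u v : ℕ) : ℝ) := by exact_mod_cast hω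
          push_cast at h2 ⊢
          linarith
        have h2 : (0:ℝ) < (q:ℝ) ^ ((X - v) * ((ℓ:ℝ) - u - X)) := Real.rpow_pos_of_pos hq0 _
        nlinarith
end

section
/- Let q ≥ 2 be an integer and let a, b be integers with 0 ≤ b ≤ a. Then q^{b(a−b)} ≤ [a, b]_q < 4 · q^{b(a−b)}. -/
open Finset

lemma auxProd (b : ℕ) :
    (1:ℚ)/4 + (1/2)^(b+1) ≤ ∏ j ∈ range b, (1 - (1/2:ℚ)^(j+1)) := by
  induction b with
  | zero => norm_num
  | succ b ih =>
    rcases Nat.eq_zero_or_pos b with rfl | hb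
    · norm_num
    rw [Finset.prod_range_succ]
    have hx : (0:ℚ) < (1/2:ℚ)^(b+1) := by positivity
    have hx2 : ((1/2:ℚ))^(b+1) ≤ 1/4 := by
      calc ((1/2:ℚ))^(b+1) ≤ (1/2:ℚ)^2 := by
            apply pow_le_pow_of_le_one (by norm_num) (by norm_num) (by omega)
        _ = 1/4 := by norm_num
    have h2 : ((1/2:ℚ))^(b+1+1) = (1/2)^(b+1) * (1/2) := by rw [pow_succ]
    nlinarith [mul_le_mul_of_nonneg_right ih (by nlinarith : (0:ℚ) ≤ 1 - (1/2:ℚ)^(b+1))]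



/-- For an integer `q ≥ 2` and integers `0 ≤ b ≤ a`:
`q^{b(a−b)} ≤ [a, b]_q < 4 q^{b(a−b)}`. -/
theorem stmt3 (q a b : ℕ) (hq : 2 ≤ q) (hb : b ≤ a) :
    (q : ℚ) ^ (b * (a - b)) ≤ gaussBinom q a b ∧
      gaussBinom q a b < 4 * (q : ℚ) ^ (b * (a - b)) := by
  set Q : ℚ := (q : ℚ) with hQdef
  have hQ : (2:ℚ) ≤ Q := by rw [hQdef]; exact_mod_cast hq
  have hQ0 : (0:ℚ) < Q := by linarith
  -- rewrite gaussBinom as a product with ℕ subtraction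
  have hgb : gaussBinom q a b = ∏ i ∈ range b, (Q ^ (a - i) - 1) / (Q ^ (b - i) - 1) := by
    rw [gaussBinom, if_pos ⟨Int.ofNat_nonneg b, by exact_mod_cast hb⟩]
    rw [Int.toNat_natCast]
    refine Finset.prod_congr rfl fun i hi => ?_
    have hi' : i < b := Finset.mem_range.mp hi
    have h1 : ((a:ℤ) - (i:ℤ)).toNat = a - i := by omega
    have h2 : ((b:ℤ) - (i:ℤ)).toNat = b - i := by omega
    rw [h1, h2]
  -- basic facts for i < b
  have key : ∀ i < b, Q ^ (a - i) = Q ^ (a - b) * Q ^ (b - i) := by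
    intro i hi
    rw [← pow_add]
    congr 1
    omega
  have hden : ∀ i < b, (1:ℚ) ≤ Q ^ (b - i) - 1 := by
    intro i hi
    have : (2:ℚ) ≤ Q ^ (b - i) := by
      calc (2:ℚ) ≤ Q := hQ
        _ = Q ^ 1 := (pow_one Q).symm
        _ ≤ Q ^ (b - i) := pow_le_pow_right₀ (by linarith) (by omega)
    linarith
  have honepow : ∀ n : ℕ, (1:ℚ) ≤ Q ^ n := fun n => by
    calc (1:ℚ) = 1 ^ n := (one_pow n).symm
      _ ≤ Q ^ n := pow_le_pow_left₀ (by norm_num) (by linarith) n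
  have hQab : (1:ℚ) ≤ Q ^ (a - b) := honepow _
  -- lower bound
  have hlow : Q ^ (b * (a - b)) ≤ gaussBinom q a b := by
    rw [hgb]
    calc Q ^ (b * (a - b)) = ∏ _i ∈ range b, Q ^ (a - b) := by
          rw [Finset.prod_const, Finset.card_range, ← pow_mul, mul_comm]
      _ ≤ ∏ i ∈ range b, (Q ^ (a - i) - 1) / (Q ^ (b - i) - 1) := by
          apply Finset.prod_le_prod
          · intro i _; positivity
          · intro i hi
            have hi' : i < b := Finset.mem_range.mp hi
            rw [le_div_iff₀ (by have := hden i hi'; linarith)]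
            have hk := key i hi'
            nlinarith [hQab, hden i hi']
  refine ⟨hlow, ?_⟩
  -- upper bound
  set D : ℚ := ∏ i ∈ range b, (1 - (Q ^ (b - i))⁻¹) with hD
  have hDgt : 1/4 < D := by
    have h1 : ∏ i ∈ range b, (1 - (1/2:ℚ)^(b - i)) = ∏ j ∈ range b, (1 - (1/2:ℚ)^(j+1)) := by
      rw [← Finset.prod_range_reflect (fun j => 1 - (1/2:ℚ)^(j+1)) b]
      refine Finset.prod_congr rfl fun i hi => ?_
      have hi' : i < b := Finset.mem_range.mp hi
      congr 2
      omega
    have h2 : ∏ i ∈ range b, (1 - (1/2:ℚ)^(b - i)) ≤ D := by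
      apply Finset.prod_le_prod
      · intro i hi
        have hi' : i < b := Finset.mem_range.mp hi
        have : ((1/2:ℚ))^(b-i) ≤ (1/2)^1 :=
          pow_le_pow_of_le_one (by norm_num) (by norm_num) (by omega)
        norm_num at this ⊢
        linarith
      · intro i hi
        have hi' : i < b := Finset.mem_range.mp hi
        have h3 : (2:ℚ)^(b-i) ≤ Q^(b-i) := pow_le_pow_left₀ (by norm_num) hQ _
        have h4 : (Q^(b-i))⁻¹ ≤ ((2:ℚ)^(b-i))⁻¹ :=
          inv_anti₀ (by positivity) h3
        have h5 : ((2:ℚ)^(b-i))⁻¹ = (1/2:ℚ)^(b-i) := by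
          rw [← inv_pow]; norm_num
        linarith [h4, h5 ▸ h4]
    have h6 := auxProd b
    have h7 : (0:ℚ) < (1/2:ℚ)^(b+1) := by positivity
    linarith [h1 ▸ h6]
  have hmul : gaussBinom q a b * D ≤ Q ^ (b * (a - b)) := by
    rw [hgb, hD, ← Finset.prod_mul_distrib]
    calc ∏ i ∈ range b, ((Q ^ (a - i) - 1) / (Q ^ (b - i) - 1) * (1 - (Q ^ (b - i))⁻¹))
        ≤ ∏ _i ∈ range b, Q ^ (a - b) := by
          apply Finset.prod_le_prod
          · intro i hi
            have hi' : i < b := Finset.mem_range.mp hi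
            have h1 := hden i hi'
            have h2 : (0:ℚ) < Q ^ (b-i) := by positivity
            have h3 : (0:ℚ) ≤ 1 - (Q ^ (b-i))⁻¹ := by
              rw [sub_nonneg, inv_le_one_iff₀]; right; linarith
            have h4 : (0:ℚ) ≤ Q ^ (a-i) - 1 := by linarith [honepow (a-i)]
            exact mul_nonneg (div_nonneg h4 (by linarith)) h3
          · intro i hi
            have hi' : i < b := Finset.mem_range.mp hi
            have h1 := hden i hi'
            have h2 : (0:ℚ) < Q ^ (b-i) := by positivity
            have heq : (Q ^ (a - i) - 1) / (Q ^ (b - i) - 1) * (1 - (Q ^ (b - i))⁻¹)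
                = (Q ^ (a - i) - 1) / Q ^ (b - i) := by
              have hne : Q ^ (b - i) - 1 ≠ 0 := by linarith
              have hne2 : Q ^ (b - i) ≠ 0 := ne_of_gt h2
              field_simp
            rw [heq, div_le_iff₀ h2]
            have hk := key i hi'
            nlinarith [pow_pos hQ0 (a-i)]
      _ = Q ^ (b * (a - b)) := by
          rw [Finset.prod_const, Finset.card_range, ← pow_mul, mul_comm]
  have hgpos : (0:ℚ) < gaussBinom q a b := lt_of_lt_of_le (by positivity) hlow
  nlinarith [mul_lt_mul_of_pos_left hDgt hgpos]
end

section
/- Let q ≥ 2 be an integer and let ℓ, u, v, j be integers with 0 ≤ u ≤ ℓ, 0 ≤ v ≤ ℓ, max{0, v−u} ≤ j ≤ v and j ≤ ℓ−u. Then [ℓ−u, j]_q · [u, v−j]_q ≤ 16 · q^{(j−v)(ℓ−u−j)} · [ℓ, v]_q. -/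
lemma gauss_nat (q : ℚ) (a b : ℕ) (h : b ≤ a) :
    gaussBinom q a b = ∏ i ∈ Finset.range b, (q ^ (a - i) - 1) / (q ^ (b - i) - 1) := by
  unfold gaussBinom
  rw [if_pos ⟨by positivity, by exact_mod_cast h⟩]
  rw [Int.toNat_natCast]
  refine Finset.prod_congr rfl fun i hi => ?_
  have hi' : i < b := Finset.mem_range.mp hi
  have h1 : ((a:ℤ) - i).toNat = a - i := by omega
  have h2 : ((b:ℤ) - i).toNat = b - i := by omega
  rw [h1, h2]

-- key product lower bound
lemma prod_one_sub_ge (r : ℚ) (hr0 : 0 ≤ r) (hr : r ≤ 1/2) (b : ℕ) :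
    (1/4 : ℚ) ≤ ∏ k ∈ Finset.range b, (1 - r ^ (k + 1)) := by
  have key : ∀ b : ℕ, 1 ≤ b → 1/4 + r ^ (b+1) ≤ ∏ k ∈ Finset.range b, (1 - r ^ (k + 1)) := by
    intro b hb
    induction b, hb using Nat.le_induction with
    | base =>
      simp only [Finset.prod_range_one, pow_one]
      nlinarith [pow_nonneg hr0 2, sq_nonneg r]
    | succ n hn ih =>
      rw [Finset.prod_range_succ]
      have hfac : (0:ℚ) ≤ 1 - r ^ (n+1) := by
        have : r ^ (n+1) ≤ (1/2:ℚ) ^ (n+1) := pow_le_pow_left₀ hr0 hr _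
        have : ((1:ℚ)/2) ^ (n+1) ≤ 1 := by
          apply pow_le_one₀ (by norm_num) (by norm_num)
        nlinarith [pow_le_pow_left₀ hr0 hr (n+1)]
      calc (1/4 : ℚ) + r ^ (n+2)
          ≤ (1/4 + r ^ (n+1)) * (1 - r ^ (n+1)) := by
            have h1 : r ^ (n+1) ≤ (1/2:ℚ)^(n+1) := pow_le_pow_left₀ hr0 hr _
            have h2 : ((1:ℚ)/2)^(n+1) ≤ (1/2)^2 := by
              apply pow_le_pow_of_le_one (by norm_num) (by norm_num) (by omega)
            have h3 : r ^ (n+2) = r ^ (n+1) * r := by ring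
            have h4 : (0:ℚ) ≤ r ^ (n+1) := pow_nonneg hr0 _
            nlinarith
        _ ≤ (∏ k ∈ Finset.range n, (1 - r ^ (k + 1))) * (1 - r ^ (n+1)) := by
            apply mul_le_mul_of_nonneg_right ih hfac
  rcases Nat.eq_zero_or_pos b with hb | hb
  · subst hb; norm_num
  · have := key b hb
    have h4 : (0:ℚ) ≤ r ^ (b+1) := pow_nonneg hr0 _
    linarith

lemma gauss_lower (q : ℚ) (hq : 2 ≤ q) (a b : ℕ) (h : b ≤ a) :
    q ^ (b * (a - b)) ≤ gaussBinom q a b := by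
  rw [gauss_nat q a b h]
  have hq1 : (1:ℚ) ≤ q := by linarith
  have hq0 : (0:ℚ) < q := by linarith
  calc q ^ (b * (a - b)) = ∏ _i ∈ Finset.range b, q ^ (a - b) := by
        rw [Finset.prod_const, ← pow_mul, Finset.card_range, mul_comm]
    _ ≤ ∏ i ∈ Finset.range b, (q ^ (a - i) - 1) / (q ^ (b - i) - 1) := by
        apply Finset.prod_le_prod
        · intro i _; positivity
        · intro i hi
          have hi' : i < b := Finset.mem_range.mp hi
          have hden : (0:ℚ) < q ^ (b - i) - 1 := by
            have : (1:ℚ) < q ^ (b - i) := by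
              apply one_lt_pow₀ (by linarith) (by omega)
            linarith
          rw [le_div_iff₀ hden]
          have he : a - b + (b - i) = a - i := by omega
          have h1 : q ^ (a - b) * q ^ (b - i) = q ^ (a - i) := by
            rw [← pow_add, he]
          have h2 : (1:ℚ) ≤ q ^ (a - b) := one_le_pow₀ hq1
          nlinarith

lemma gauss_upper (q : ℚ) (hq : 2 ≤ q) (a b : ℕ) (h : b ≤ a) :
    gaussBinom q a b ≤ 4 * q ^ (b * (a - b)) := by
  rw [gauss_nat q a b h]
  have hq1 : (1:ℚ) ≤ q := by linarith
  have hq0 : (0:ℚ) < q := by linarith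
  have hr0 : (0:ℚ) ≤ q⁻¹ := by positivity
  have hr : q⁻¹ ≤ 1/2 := by
    rw [inv_le_comm₀ hq0 (by norm_num)] at *; linarith [inv_anti₀ (by norm_num : (0:ℚ)<2) hq]
  calc ∏ i ∈ Finset.range b, (q ^ (a - i) - 1) / (q ^ (b - i) - 1)
      ≤ ∏ i ∈ Finset.range b, q ^ (a - b) * (1 - q⁻¹ ^ (b - i))⁻¹ := by
        apply Finset.prod_le_prod
        · intro i hi
          have hi' : i < b := Finset.mem_range.mp hi
          have hden : (0:ℚ) < q ^ (b - i) - 1 := by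
            have : (1:ℚ) < q ^ (b - i) := one_lt_pow₀ (by linarith) (by omega)
            linarith
          have hnum : (0:ℚ) ≤ q ^ (a - i) - 1 := by
            have : (1:ℚ) ≤ q ^ (a - i) := one_le_pow₀ hq1
            linarith
          exact div_nonneg hnum hden.le
        · intro i hi
          have hi' : i < b := Finset.mem_range.mp hi
          have hden : (0:ℚ) < q ^ (b - i) - 1 := by
            have : (1:ℚ) < q ^ (b - i) := one_lt_pow₀ (by linarith) (by omega)
            linarith
          rw [div_le_iff₀ hden]
          have h0 : (1 - q⁻¹ ^ (b - i)) = (q ^ (b - i) - 1) / q ^ (b - i) := by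
            rw [inv_pow]; field_simp
          rw [h0, inv_div]
          have he : a - b + (b - i) = a - i := by omega
          have h2 : q ^ (a - b) * q ^ (b - i) = q ^ (a - i) := by rw [← pow_add, he]
          field_simp
          nlinarith [pow_pos hq0 (a-i), pow_pos hq0 (b-i), pow_pos hq0 (a-b)]
    _ = q ^ (b * (a - b)) * (∏ i ∈ Finset.range b, (1 - q⁻¹ ^ (b - i)))⁻¹ := by
        rw [Finset.prod_mul_distrib, Finset.prod_const, Finset.card_range, ← pow_mul,
          mul_comm b, ← Finset.prod_inv_distrib]
    _ ≤ q ^ (b * (a - b)) * 4 := by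
        apply mul_le_mul_of_nonneg_left _ (by positivity)
        have hre : ∏ i ∈ Finset.range b, (1 - q⁻¹ ^ (b - i))
            = ∏ k ∈ Finset.range b, (1 - q⁻¹ ^ (k + 1)) := by
          rw [← Finset.prod_range_reflect]
          refine Finset.prod_congr rfl fun i hi => ?_
          have hi' := Finset.mem_range.mp hi
          have he2 : b - (b - 1 - i) = i + 1 := by omega
          rw [he2]
        rw [hre]
        have hp := prod_one_sub_ge q⁻¹ hr0 hr b
        rw [inv_le_comm₀ (by linarith) (by norm_num)]
        linarith
    _ = 4 * q ^ (b * (a - b)) := by ring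

/-- For `q ≥ 2`, `0 ≤ u ≤ ℓ`, `0 ≤ v ≤ ℓ`, `max{0, v−u} ≤ j ≤ v`, `j ≤ ℓ−u`:
`[ℓ−u, j]_q · [u, v−j]_q ≤ 16 · q^{(j−v)(ℓ−u−j)} · [ℓ, v]_q`. -/
theorem stmt4 (q ℓ u v j : ℕ) (hq : 2 ≤ q)
    (hu : u ≤ ℓ) (hv : v ≤ ℓ) (hj0 : v ≤ u + j) (hjv : j ≤ v) (hjl : u + j ≤ ℓ) :
    gaussBinom q ((ℓ : ℤ) - u) j * gaussBinom q u ((v : ℤ) - j)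
      ≤ 16 * (q : ℚ) ^ (((j : ℤ) - v) * ((ℓ : ℤ) - u - j)) * gaussBinom q ℓ v := by
  have hq2 : (2:ℚ) ≤ q := by exact_mod_cast hq
  have hq1 : (1:ℚ) ≤ q := by linarith
  have hq0 : (0:ℚ) < q := by linarith
  have h1 : (ℓ:ℤ) - u = ((ℓ - u : ℕ) : ℤ) := by omega
  have h2 : (v:ℤ) - j = ((v - j : ℕ) : ℤ) := by omega
  rw [h1, h2]
  have A := gauss_upper (q:ℚ) hq2 (ℓ-u) j (by omega)
  have B := gauss_upper (q:ℚ) hq2 u (v-j) (by omega)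
  have C := gauss_lower (q:ℚ) hq2 ℓ v hv
  have pA : (0:ℚ) < gaussBinom q (↑(ℓ-u)) j :=
    lt_of_lt_of_le (by positivity) (gauss_lower (q:ℚ) hq2 (ℓ-u) j (by omega))
  have pB : (0:ℚ) < gaussBinom q u (↑(v-j)) :=
    lt_of_lt_of_le (by positivity) (gauss_lower (q:ℚ) hq2 u (v-j) (by omega))
  set E : ℤ := ((j : ℤ) - v) * (((ℓ - u : ℕ) : ℤ) - j) with hE
  have hzE : (0:ℚ) < (q:ℚ) ^ E := zpow_pos hq0 E
  calc gaussBinom q (↑(ℓ-u)) j * gaussBinom q u (↑(v-j))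
      ≤ (4 * (q:ℚ) ^ (j * (ℓ - u - j))) * (4 * (q:ℚ) ^ ((v-j) * (u - (v-j)))) :=
        mul_le_mul A B pB.le (by positivity)
    _ = 16 * (q:ℚ) ^ (j * (ℓ - u - j) + (v-j) * (u - (v-j))) := by
        rw [pow_add]; ring
    _ ≤ 16 * ((q:ℚ) ^ E * (q:ℚ) ^ (v * (ℓ - v))) := by
        rw [← zpow_natCast (q:ℚ) (j * (ℓ - u - j) + (v-j) * (u - (v-j))),
          ← zpow_natCast (q:ℚ) (v * (ℓ - v)), ← zpow_add₀ (by positivity : (q:ℚ) ≠ 0)]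
        apply mul_le_mul_of_nonneg_left _ (by norm_num)
        apply zpow_le_zpow_right₀ hq1
        have e1 : ((ℓ - u - j : ℕ) : ℤ) = (ℓ:ℤ) - u - j := by omega
        have e2 : ((v - j : ℕ):ℤ) = (v:ℤ) - j := by omega
        have e3 : ((u - (v-j) : ℕ):ℤ) = (u:ℤ) - ((v:ℤ) - j) := by omega
        have e4 : ((ℓ - v : ℕ):ℤ) = (ℓ:ℤ) - v := by omega
        have e5 : ((ℓ - u : ℕ):ℤ) = (ℓ:ℤ) - u := by omega
        rw [hE]
        push_cast [e1, e2, e3, e4, e5]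
        have key : ((j:ℤ)-v)*((ℓ:ℤ)-u-j) + (v:ℤ)*((ℓ:ℤ)-v)
            - ((j:ℤ)*((ℓ:ℤ)-u-j) + ((v:ℤ)-j)*((u:ℤ)-((v:ℤ)-j))) = (j:ℤ)*((u:ℤ)+j-v) := by
          ring
        have hnn : (0:ℤ) ≤ (j:ℤ)*((u:ℤ)+j-v) := by
          apply mul_nonneg (by positivity)
          omega
        linarith
    _ ≤ 16 * ((q:ℚ) ^ E * gaussBinom q ℓ v) := by
        apply mul_le_mul_of_nonneg_left _ (by norm_num)
        exact mul_le_mul_of_nonneg_left C hzE.le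
    _ = 16 * (q:ℚ) ^ E * gaussBinom q ℓ v := by ring
end

section
/- Let q ≥ 2 be an integer and let m, n, j be integers with 0 ≤ j ≤ min{m, n}. Then ∏_{i=0}^{j−1} (q^m − q^i)(q^n − q^i)/(q^j − q^i) ≤ 4 · q^{j(n+m) − j^2}. Consequently, for any integer k, q^{m(k−n)} · ∏_{i=0}^{j−1} (q^m − q^i)(q^n − q^i)/(q^j − q^i) ≤ 4 · q^{m(k−n) + j(n+m) − j^2}. -/
lemma aux_prod (j : ℕ) :
    (1/4 : ℚ) + (1/2)^(j+1) ≤ ∏ t ∈ Finset.range j, (1 - (1/2:ℚ)^(t+1)) := by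
  induction j with
  | zero => norm_num
  | succ j ih =>
    rw [Finset.prod_range_succ]
    rcases Nat.eq_zero_or_pos j with h0 | h1
    · subst h0; norm_num
    set x : ℚ := (1/2:ℚ)^(j+1) with hxdef
    have hx : (0:ℚ) < x := by positivity
    have hx2 : x ≤ 1/4 := by
      rw [hxdef]
      calc ((1/2:ℚ))^(j+1) ≤ (1/2:ℚ)^2 :=
        pow_le_pow_of_le_one (by norm_num) (by norm_num) (by omega)
      _ = 1/4 := by norm_num
    have h2 : ((1/2:ℚ))^(j+1+1) = x * (1/2) := pow_succ _ _
    rw [h2]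
    have hpos : (0:ℚ) ≤ 1 - x := by nlinarith
    nlinarith [mul_le_mul_of_nonneg_right ih hpos]


/-- For `q ≥ 2` and `0 ≤ j ≤ min{m, n}`:
`∏_{i=0}^{j−1} (q^m − q^i)(q^n − q^i)/(q^j − q^i) ≤ 4 q^{j(n+m) − j²}`, and consequently,
for any integer `k`,
`q^{m(k−n)} ∏_{i=0}^{j−1} (q^m − q^i)(q^n − q^i)/(q^j − q^i) ≤ 4 q^{m(k−n) + j(n+m) − j²}`. -/
theorem stmt9 (q m n j : ℕ) (hq : 2 ≤ q) (hj : j ≤ min m n) :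
    (∏ i ∈ Finset.range j,
        ((q : ℚ) ^ m - (q : ℚ) ^ i) * ((q : ℚ) ^ n - (q : ℚ) ^ i)
          / ((q : ℚ) ^ j - (q : ℚ) ^ i))
      ≤ 4 * (q : ℚ) ^ (j * (n + m) - j * j)
    ∧ ∀ k : ℤ,
      (q : ℚ) ^ ((m : ℤ) * (k - n)) * (∏ i ∈ Finset.range j,
          ((q : ℚ) ^ m - (q : ℚ) ^ i) * ((q : ℚ) ^ n - (q : ℚ) ^ i)
            / ((q : ℚ) ^ j - (q : ℚ) ^ i))
        ≤ 4 * (q : ℚ) ^ ((m : ℤ) * (k - n) + j * (n + m) - j * j) := by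
  have hjm : j ≤ m := hj.trans (min_le_left _ _)
  have hjn : j ≤ n := hj.trans (min_le_right _ _)
  have hq2 : (2:ℚ) ≤ (q:ℚ) := by exact_mod_cast hq
  have hq1 : (1:ℚ) < (q:ℚ) := lt_of_lt_of_le one_lt_two hq2
  have hq0 : (0:ℚ) < (q:ℚ) := lt_trans one_pos hq1
  have hqne : (q:ℚ) ≠ 0 := ne_of_gt hq0
  have hs_half : ∀ i ∈ Finset.range j, (1/2:ℚ) ≤ 1 - (1/2:ℚ)^(j-i) := by
    intro i hi
    rw [Finset.mem_range] at hi
    have : ((1/2:ℚ))^(j-i) ≤ (1/2:ℚ)^1 :=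
      pow_le_pow_of_le_one (by norm_num) (by norm_num) (by omega)
    norm_num at this ⊢
    linarith
  have hden : ∀ i ∈ Finset.range j,
      (q:ℚ)^j * (1 - (1/2:ℚ)^(j-i)) ≤ (q:ℚ)^j - (q:ℚ)^i := by
    intro i hi
    rw [Finset.mem_range] at hi
    have hsplit : (q:ℚ)^j = (q:ℚ)^i * (q:ℚ)^(j-i) := by
      rw [← pow_add]; congr 1; omega
    have h1 : (q:ℚ)^i * 1 ≤ (q:ℚ)^i * ((q:ℚ) * (1/2))^(j-i) :=
      mul_le_mul_of_nonneg_left (one_le_pow₀ (by linarith)) (by positivity)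
    have h2 : (q:ℚ)^i * ((q:ℚ) * (1/2))^(j-i) = (q:ℚ)^j * (1/2:ℚ)^(j-i) := by
      rw [hsplit, mul_pow]; ring
    have h3 : (q:ℚ)^i ≤ (q:ℚ)^j * (1/2:ℚ)^(j-i) := by
      rw [← h2]; linarith [h1]
    linarith [h3]
  have step : ∀ i ∈ Finset.range j,
      ((q:ℚ)^m - (q:ℚ)^i) * ((q:ℚ)^n - (q:ℚ)^i) / ((q:ℚ)^j - (q:ℚ)^i)
        ≤ (q:ℚ)^(m+n-j) * (1 - (1/2:ℚ)^(j-i))⁻¹ := by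
    intro i hi
    have hir := Finset.mem_range.mp hi
    have hs := hs_half i hi
    have hspos : (0:ℚ) < 1 - (1/2:ℚ)^(j-i) := by linarith
    have hdpos : (0:ℚ) < (q:ℚ)^j * (1 - (1/2:ℚ)^(j-i)) := by positivity
    have hipos : (0:ℚ) < (q:ℚ)^i := pow_pos hq0 i
    have him : (q:ℚ)^i ≤ (q:ℚ)^m := pow_le_pow_right₀ hq1.le (by omega)
    have hin : (q:ℚ)^i ≤ (q:ℚ)^n := pow_le_pow_right₀ hq1.le (by omega)
    have hnum : ((q:ℚ)^m - (q:ℚ)^i) * ((q:ℚ)^n - (q:ℚ)^i) ≤ (q:ℚ)^(m+n) := by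
      rw [pow_add]
      apply mul_le_mul (by linarith) (by linarith) (by linarith) (by positivity)
    have hd := hden i hi
    calc ((q:ℚ)^m - (q:ℚ)^i) * ((q:ℚ)^n - (q:ℚ)^i) / ((q:ℚ)^j - (q:ℚ)^i)
        ≤ (q:ℚ)^(m+n) / ((q:ℚ)^j * (1 - (1/2:ℚ)^(j-i))) :=
          div_le_div₀ (by positivity) hnum hdpos hd
      _ = (q:ℚ)^(m+n-j) * (1 - (1/2:ℚ)^(j-i))⁻¹ := by
          have hsplit : (q:ℚ)^(m+n) = (q:ℚ)^(m+n-j) * (q:ℚ)^j := by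
            rw [← pow_add]; congr 1; omega
          rw [hsplit]
          have h2pos : (0:ℚ) < (2:ℚ)^(j-i) - 1 := by
            have : (2:ℚ)^1 ≤ (2:ℚ)^(j-i) := pow_le_pow_right₀ one_le_two (by omega)
            norm_num at this; linarith
          field_simp
  have hnonneg : ∀ i ∈ Finset.range j,
      (0:ℚ) ≤ ((q:ℚ)^m - (q:ℚ)^i) * ((q:ℚ)^n - (q:ℚ)^i) / ((q:ℚ)^j - (q:ℚ)^i) := by
    intro i hi
    have hir := Finset.mem_range.mp hi
    have him : (q:ℚ)^i ≤ (q:ℚ)^m := pow_le_pow_right₀ hq1.le (by omega)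
    have hin : (q:ℚ)^i ≤ (q:ℚ)^n := pow_le_pow_right₀ hq1.le (by omega)
    have hij : (q:ℚ)^i < (q:ℚ)^j := pow_lt_pow_right₀ hq1 hir
    apply div_nonneg (mul_nonneg (by linarith) (by linarith)) (by linarith)
  -- the reflected product
  have hrefl : (∏ i ∈ Finset.range j, (1 - (1/2:ℚ)^(j-i)))
      = ∏ t ∈ Finset.range j, (1 - (1/2:ℚ)^(t+1)) := by
    rw [← Finset.prod_range_reflect (fun t => 1 - (1/2:ℚ)^(t+1)) j]
    apply Finset.prod_congr rfl
    intro i hi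
    have hir := Finset.mem_range.mp hi
    congr 2
    omega
  have hP : (1/4:ℚ) ≤ ∏ i ∈ Finset.range j, (1 - (1/2:ℚ)^(j-i)) := by
    rw [hrefl]
    have := aux_prod j
    have : (0:ℚ) < (1/2:ℚ)^(j+1) := by positivity
    linarith [aux_prod j]
  have hPpos : (0:ℚ) < ∏ i ∈ Finset.range j, (1 - (1/2:ℚ)^(j-i)) := by linarith
  have hPinv : (∏ i ∈ Finset.range j, (1 - (1/2:ℚ)^(j-i)))⁻¹ ≤ 4 := by
    rw [inv_le_comm₀ hPpos (by norm_num)]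
    linarith
  have hexp : (m+n-j)*j = j*(n+m) - j*j := by
    rw [Nat.sub_mul]
    congr 1 <;> ring
  have key : (∏ i ∈ Finset.range j,
      ((q:ℚ)^m - (q:ℚ)^i) * ((q:ℚ)^n - (q:ℚ)^i) / ((q:ℚ)^j - (q:ℚ)^i))
      ≤ 4 * (q:ℚ)^(j*(n+m) - j*j) := by
    calc (∏ i ∈ Finset.range j,
        ((q:ℚ)^m - (q:ℚ)^i) * ((q:ℚ)^n - (q:ℚ)^i) / ((q:ℚ)^j - (q:ℚ)^i))
        ≤ ∏ i ∈ Finset.range j, (q:ℚ)^(m+n-j) * (1 - (1/2:ℚ)^(j-i))⁻¹ :=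
          Finset.prod_le_prod hnonneg step
      _ = ((q:ℚ)^(m+n-j))^j * (∏ i ∈ Finset.range j, (1 - (1/2:ℚ)^(j-i)))⁻¹ := by
          rw [Finset.prod_mul_distrib, Finset.prod_const, Finset.prod_inv_distrib, Finset.card_range]
      _ ≤ ((q:ℚ)^(m+n-j))^j * 4 :=
          mul_le_mul_of_nonneg_left hPinv (by positivity)
      _ = 4 * (q:ℚ)^(j*(n+m) - j*j) := by
          rw [← pow_mul, hexp]; ring
  refine ⟨key, fun k => ?_⟩
  have hjj : j*j ≤ j*(n+m) := Nat.mul_le_mul_left j (by omega)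
  have hz : (q:ℚ)^((m:ℤ)*(k-(n:ℤ)) + (j:ℤ)*((n:ℤ)+(m:ℤ)) - (j:ℤ)*(j:ℤ))
      = (q:ℚ)^((m:ℤ)*(k-(n:ℤ))) * (q:ℚ)^(j*(n+m) - j*j : ℕ) := by
    rw [← zpow_natCast (q:ℚ) (j*(n+m) - j*j), ← zpow_add₀ hqne]
    congr 1
    push_cast [hjj]
    ring
  have hzpos : (0:ℚ) < (q:ℚ)^((m:ℤ)*(k-(n:ℤ))) := zpow_pos hq0 _
  calc (q:ℚ)^((m:ℤ)*(k-(n:ℤ))) * (∏ i ∈ Finset.range j,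
        ((q:ℚ)^m - (q:ℚ)^i) * ((q:ℚ)^n - (q:ℚ)^i) / ((q:ℚ)^j - (q:ℚ)^i))
      ≤ (q:ℚ)^((m:ℤ)*(k-(n:ℤ))) * (4 * (q:ℚ)^(j*(n+m) - j*j)) :=
        mul_le_mul_of_nonneg_left key hzpos.le
    _ = 4 * (q:ℚ)^((m:ℤ)*(k-(n:ℤ)) + (j:ℤ)*((n:ℤ)+(m:ℤ)) - (j:ℤ)*(j:ℤ)) := by
        rw [hz]; ring
end

section
/- Let q ≥ 2 be an integer, let m, n, k, w, δ be integers with 0 ≤ k ≤ n ≤ m, (n−k)/2 < w ≤ n, and 2w − (n−k) ≤ δ ≤ n − k. Define Ā_w := q^{m(k−n)} · ∏_{i=0}^{w−1} (q^m − q^i)(q^n − q^i)/(q^w − q^i) and P := (Σ_{i=⌈w − (n−k)/2 + δ/2⌉}^{min{δ, w}} [n−w, δ−i]_q · [w, i]_q · q^{(w−i)(δ−i)}) / [n, δ]_q. Then Ā_w · P ≤ 64 n · q^{m(k−n) + w(n+m) − w^2 − ⌈δ/2 + w − (n−k)/2⌉ · ((n+k)/2 − ⌈δ/2⌉)}. 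-/
lemma half_prod (b : ℕ) :
    (1/4 : ℝ) + (1/2)^(b+1) ≤ ∏ j ∈ Finset.range b, (1 - (1/2:ℝ)^(j+1)) := by
  induction b with
  | zero => norm_num
  | succ b ih =>
    rw [Finset.prod_range_succ]
    rcases Nat.eq_zero_or_pos b with hb | hb
    · subst hb; norm_num
    · have h2 : ((1:ℝ)/2)^(b+1) ≤ 1/4 := by
        calc ((1:ℝ)/2)^(b+1) ≤ ((1:ℝ)/2)^2 :=
          pow_le_pow_of_le_one (by norm_num) (by norm_num) (by omega)
        _ = 1/4 := by norm_num
      have h3 : (0:ℝ) < (1/2:ℝ)^(b+1) := by positivity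
      have hps := pow_succ (1/2:ℝ) (b+1)
      nlinarith [ih, h2, h3, mul_nonneg (sub_nonneg.2 ih) (by linarith : (0:ℝ) ≤ 1 - (1/2:ℝ)^(b+1)), mul_nonneg h3.le (by linarith : (0:ℝ) ≤ 1/4 - (1/2:ℝ)^(b+1))]

lemma quarter_le_prod {Q : ℝ} (hQ : 2 ≤ Q) (b : ℕ) :
    (1/4 : ℝ) ≤ ∏ j ∈ Finset.range b, (1 - Q⁻¹^(j+1)) := by
  have hQ0 : (0:ℝ) < Q := by linarith
  have hi : Q⁻¹ ≤ 1/2 := by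
    rw [inv_le_comm₀ (by linarith) (by norm_num)]; linarith [inv_le_one_of_one_le₀ (by linarith : (1:ℝ) ≤ Q)]
  have hi0 : 0 ≤ Q⁻¹ := by positivity
  calc (1/4:ℝ) ≤ 1/4 + (1/2)^(b+1) := le_add_of_nonneg_right (by positivity)
    _ ≤ ∏ j ∈ Finset.range b, (1 - (1/2:ℝ)^(j+1)) := half_prod b
    _ ≤ ∏ j ∈ Finset.range b, (1 - Q⁻¹^(j+1)) := by
        apply Finset.prod_le_prod
        · intro j _; have : ((1:ℝ)/2)^(j+1) ≤ 1 := by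
            apply pow_le_one₀ <;> norm_num
          linarith
        · intro j _
          have : Q⁻¹^(j+1) ≤ (1/2:ℝ)^(j+1) := pow_le_pow_left₀ hi0 hi _
          linarith

lemma quarter_le_prod' {Q : ℝ} (hQ : 2 ≤ Q) (b : ℕ) :
    (1/4 : ℝ) ≤ ∏ i ∈ Finset.range b, (1 - Q⁻¹^(b-i)) := by
  have : ∏ i ∈ Finset.range b, (1 - Q⁻¹^(b-i))
      = ∏ j ∈ Finset.range b, (1 - Q⁻¹^(j+1)) := by
    rw [← Finset.prod_range_reflect]
    apply Finset.prod_congr rfl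
    intro i hi
    rw [Finset.mem_range] at hi
    congr 2
    omega
  rw [this]; exact quarter_le_prod hQ b

lemma gb_prod_upper {Q : ℝ} (hQ : 2 ≤ Q) {a b : ℕ} (hba : b ≤ a) :
    ∏ i ∈ Finset.range b, (Q ^ (a - i) - 1) / (Q ^ (b - i) - 1)
      ≤ 4 * Q ^ (b * (a - b)) := by
  have hQ0 : (0:ℝ) < Q := by linarith
  have hQ1 : (1:ℝ) ≤ Q := by linarith
  have hden : ∀ i ∈ Finset.range b, (0:ℝ) < Q ^ (b - i) - 1 := by
    intro i hi
    rw [Finset.mem_range] at hi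
    have : (2:ℝ) ≤ Q ^ (b - i) := by
      calc (2:ℝ) ≤ Q := hQ
      _ = Q ^ 1 := (pow_one Q).symm
      _ ≤ Q ^ (b - i) := pow_le_pow_right₀ hQ1 (by omega)
    linarith
  have key : ∀ i ∈ Finset.range b,
      (Q ^ (a - i) - 1) / (Q ^ (b - i) - 1) ≤ Q ^ (a - b) * (1 - Q⁻¹ ^ (b - i))⁻¹ := by
    intro i hi
    have h1 := hden i hi
    rw [Finset.mem_range] at hi
    have e1 : (1 - Q⁻¹ ^ (b - i)) = (Q ^ (b - i) - 1) / Q ^ (b - i) := by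
      rw [inv_pow]; field_simp
    have e2 : Q ^ (a - b) * (1 - Q⁻¹ ^ (b - i))⁻¹ = Q ^ (a - i) / (Q ^ (b - i) - 1) := by
      rw [e1, inv_div, ← mul_div_assoc, ← pow_add]
      congr 2
      omega
    rw [e2]
    gcongr
    linarith
  calc ∏ i ∈ Finset.range b, (Q ^ (a - i) - 1) / (Q ^ (b - i) - 1)
      ≤ ∏ i ∈ Finset.range b, Q ^ (a - b) * (1 - Q⁻¹ ^ (b - i))⁻¹ := by
        apply Finset.prod_le_prod
        · intro i hi
          have h1 := hden i hi
          have h2 : (1:ℝ) ≤ Q ^ (a - i) := one_le_pow₀ hQ1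
          exact div_nonneg (by linarith) (by linarith)
        · exact key
    _ = Q ^ (b * (a - b)) * (∏ i ∈ Finset.range b, (1 - Q⁻¹ ^ (b - i)))⁻¹ := by
        rw [Finset.prod_mul_distrib, Finset.prod_const, ← Finset.prod_inv_distrib,
          Finset.card_range, ← pow_mul, mul_comm (a-b) b]
    _ ≤ Q ^ (b * (a - b)) * 4 := by
        have hp := quarter_le_prod' hQ b
        have : (∏ i ∈ Finset.range b, (1 - Q⁻¹ ^ (b - i)))⁻¹ ≤ 4 := by
          rw [show (4:ℝ) = (1/4)⁻¹ by norm_num]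
          exact inv_anti₀ (by norm_num) hp
        exact mul_le_mul_of_nonneg_left this (pow_nonneg hQ0.le _)
    _ = 4 * Q ^ (b * (a - b)) := mul_comm _ _

lemma gb_prod_lower {Q : ℝ} (hQ : 2 ≤ Q) {a b : ℕ} (hba : b ≤ a) :
    Q ^ (b * (a - b)) ≤ ∏ i ∈ Finset.range b, (Q ^ (a - i) - 1) / (Q ^ (b - i) - 1) := by
  have hQ0 : (0:ℝ) < Q := by linarith
  have hQ1 : (1:ℝ) ≤ Q := by linarith
  have : Q ^ (b * (a - b)) = ∏ _i ∈ Finset.range b, Q ^ (a - b) := by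
    rw [Finset.prod_const, Finset.card_range, ← pow_mul, mul_comm (a-b) b]
  rw [this]
  apply Finset.prod_le_prod
  · intro i _; positivity
  · intro i hi
    rw [Finset.mem_range] at hi
    have h1 : (0:ℝ) < Q ^ (b - i) - 1 := by
      have : (2:ℝ) ≤ Q ^ (b - i) := by
        calc (2:ℝ) ≤ Q := hQ
        _ = Q ^ 1 := (pow_one Q).symm
        _ ≤ Q ^ (b - i) := pow_le_pow_right₀ hQ1 (by omega)
      linarith
    rw [le_div_iff₀ h1]
    have e : Q ^ (a - b) * Q ^ (b - i) = Q ^ (a - i) := by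
      rw [← pow_add]; congr 1; omega
    have h2 : (1:ℝ) ≤ Q ^ (a - b) := one_le_pow₀ hQ1
    nlinarith [h2]

lemma A_prod_upper {Q : ℝ} (hQ : 2 ≤ Q) {m n w : ℕ} (hw : w ≤ n) (hn : n ≤ m) :
    ∏ i ∈ Finset.range w, (Q ^ m - Q ^ i) * (Q ^ n - Q ^ i) / (Q ^ w - Q ^ i)
      ≤ 4 * Q ^ (w * (m + n - w)) := by
  have hQ0 : (0:ℝ) < Q := by linarith
  have hQ1 : (1:ℝ) ≤ Q := by linarith
  have hden : ∀ i ∈ Finset.range w, (0:ℝ) < Q ^ w - Q ^ i := by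
    intro i hi
    rw [Finset.mem_range] at hi
    have h1 : Q ^ i < Q ^ w := pow_lt_pow_right₀ (by linarith) hi
    linarith
  have key : ∀ i ∈ Finset.range w,
      (Q ^ m - Q ^ i) * (Q ^ n - Q ^ i) / (Q ^ w - Q ^ i)
        ≤ Q ^ (m + n - w) * (1 - Q⁻¹ ^ (w - i))⁻¹ := by
    intro i hi
    have h1 := hden i hi
    rw [Finset.mem_range] at hi
    have hsplit : Q ^ w = Q ^ (w-i) * Q ^ i := by rw [← pow_add]; congr 1; omega
    have h0 : Q ^ (w-i) ≠ 0 := by positivity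
    have e1 : (1 - Q⁻¹ ^ (w - i)) = (Q ^ w - Q ^ i) / Q ^ w := by
      rw [inv_pow, eq_div_iff (by positivity : (Q:ℝ) ^ w ≠ 0), sub_mul, one_mul, hsplit,
        ← mul_assoc, inv_mul_cancel₀ h0, one_mul]
    have e2 : Q ^ (m + n - w) * (1 - Q⁻¹ ^ (w - i))⁻¹
        = Q ^ m * Q ^ n / (Q ^ w - Q ^ i) := by
      rw [e1, inv_div, ← mul_div_assoc, ← pow_add, ← pow_add]
      congr 2
      omega
    rw [e2]
    gcongr
    · exact sub_nonneg.2 (pow_le_pow_right₀ hQ1 (by omega))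
    · linarith [pow_pos hQ0 i]
    · linarith [pow_pos hQ0 i]
  calc ∏ i ∈ Finset.range w, (Q ^ m - Q ^ i) * (Q ^ n - Q ^ i) / (Q ^ w - Q ^ i)
      ≤ ∏ i ∈ Finset.range w, Q ^ (m + n - w) * (1 - Q⁻¹ ^ (w - i))⁻¹ := by
        apply Finset.prod_le_prod
        · intro i hi
          have h1 := hden i hi
          rw [Finset.mem_range] at hi
          have h2 : Q ^ i ≤ Q ^ m := pow_le_pow_right₀ hQ1 (by omega)
          have h3 : Q ^ i ≤ Q ^ n := pow_le_pow_right₀ hQ1 (by omega)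
          have := mul_nonneg (sub_nonneg.2 h2) (sub_nonneg.2 h3)
          positivity
        · exact key
    _ = Q ^ (w * (m + n - w)) * (∏ i ∈ Finset.range w, (1 - Q⁻¹ ^ (w - i)))⁻¹ := by
        rw [Finset.prod_mul_distrib, Finset.prod_const, ← Finset.prod_inv_distrib,
          Finset.card_range, ← pow_mul, mul_comm (m+n-w) w]
    _ ≤ Q ^ (w * (m + n - w)) * 4 := by
        have hp := quarter_le_prod' hQ w
        have : (∏ i ∈ Finset.range w, (1 - Q⁻¹ ^ (w - i)))⁻¹ ≤ 4 := by
          rw [show (4:ℝ) = (1/4)⁻¹ by norm_num]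
          exact inv_anti₀ (by norm_num) hp
        exact mul_le_mul_of_nonneg_left this (pow_nonneg hQ0.le _)
    _ = 4 * Q ^ (w * (m + n - w)) := mul_comm _ _

lemma A_prod_nonneg {Q : ℝ} (hQ : 2 ≤ Q) {m n w : ℕ} (hw : w ≤ n) (hn : n ≤ m) :
    0 ≤ ∏ i ∈ Finset.range w, (Q ^ m - Q ^ i) * (Q ^ n - Q ^ i) / (Q ^ w - Q ^ i) := by
  have hQ0 : (0:ℝ) < Q := by linarith
  have hQ1 : (1:ℝ) ≤ Q := by linarith
  apply Finset.prod_nonneg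
  intro i hi
  rw [Finset.mem_range] at hi
  have h1 : Q ^ i < Q ^ w := pow_lt_pow_right₀ (by linarith) hi
  have h2 : Q ^ i ≤ Q ^ m := pow_le_pow_right₀ hQ1 (by omega)
  have h3 : Q ^ i ≤ Q ^ n := pow_le_pow_right₀ hQ1 (by omega)
  have := mul_nonneg (sub_nonneg.2 h2) (sub_nonneg.2 h3)
  have h4 : (0:ℝ) < Q ^ w - Q ^ i := by linarith
  positivity




lemma gb_cast (q : ℕ) (a b : ℕ) (hba : b ≤ a) :
    ((gaussBinom q a b : ℚ) : ℝ)
      = ∏ i ∈ Finset.range b, ((q:ℝ) ^ (a - i) - 1) / ((q:ℝ) ^ (b - i) - 1) := by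
  rw [gaussBinom, if_pos ⟨Int.natCast_nonneg b, by exact_mod_cast hba⟩]
  rw [show ((b:ℤ)).toNat = b from Int.toNat_natCast b]
  push_cast
  apply Finset.prod_congr rfl
  intro i hi
  rw [Finset.mem_range] at hi
  have h1 : ((a:ℤ) - (i:ℕ)).toNat = a - i := by omega
  have h2 : ((b:ℤ) - (i:ℕ)).toNat = b - i := by omega
  rw [h1, h2]


set_option maxHeartbeats 1000000 in
/-- With `Ā_w = q^{m(k−n)} ∏_{i=0}^{w−1} (q^m − q^i)(q^n − q^i)/(q^w − q^i)` and
`P = (Σ_{i=⌈w−(n−k)/2+δ/2⌉}^{min{δ,w}} [n−w, δ−i]_q [w, i]_q q^{(w−i)(δ−i)}) / [n, δ]_q`,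
one has `Ā_w · P ≤ 64 n q^{m(k−n) + w(n+m) − w² − ⌈δ/2 + w − (n−k)/2⌉((n+k)/2 − ⌈δ/2⌉)}`. -/
theorem stmt10 (q m n k w δ : ℕ) (hq : 2 ≤ q)
    (hk : k ≤ n) (hn : n ≤ m) (hw1 : ((n : ℚ) - k) / 2 < w) (hw2 : w ≤ n)
    (hδ1 : 2 * w + k ≤ δ + n) (hδ2 : δ + k ≤ n) :
    ((q : ℝ) ^ ((m : ℤ) * ((k : ℤ) - n)) * ∏ i ∈ Finset.range w,
        ((q : ℝ) ^ m - (q : ℝ) ^ i) * ((q : ℝ) ^ n - (q : ℝ) ^ i)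
          / ((q : ℝ) ^ w - (q : ℝ) ^ i))
      * ((∑ i ∈ Finset.Icc (⌈(w : ℚ) - ((n : ℚ) - k) / 2 + (δ : ℚ) / 2⌉) ((min δ w : ℕ) : ℤ),
            ((gaussBinom q ((n : ℤ) - w) ((δ : ℤ) - i) : ℚ) : ℝ)
              * ((gaussBinom q w i : ℚ) : ℝ) * (q : ℝ) ^ (((w : ℤ) - i) * ((δ : ℤ) - i)))
          / ((gaussBinom q n δ : ℚ) : ℝ))
      ≤ 64 * n * (q : ℝ) ^ ((m : ℝ) * ((k : ℝ) - n) + w * ((n : ℝ) + m) - (w : ℝ) ^ 2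
          - (⌈(δ : ℚ) / 2 + w - ((n : ℚ) - k) / 2⌉ : ℝ)
            * (((n : ℝ) + k) / 2 - (⌈(δ : ℚ) / 2⌉ : ℝ))) := by
  have hq2 : (2:ℝ) ≤ (q:ℝ) := by exact_mod_cast hq
  have hq0 : (0:ℝ) < q := by linarith
  have hq1 : (1:ℝ) < q := by linarith
  have hqne : (q:ℝ) ≠ 0 := ne_of_gt hq0
  have hkQ : (k:ℚ) ≤ n := by exact_mod_cast hk
  have hw0 : 1 ≤ w := by
    rcases Nat.eq_zero_or_pos w with h | h
    · exfalso; subst h; push_cast at hw1; linarith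
    · exact h
  have hδn : δ ≤ n := by omega
  have hwmn : w ≤ m + n := by omega
  set Q := (q:ℝ) with hQdef
  set i₀ : ℤ := ⌈(w : ℚ) - ((n : ℚ) - k) / 2 + (δ : ℚ) / 2⌉ with hi₀def
  have hceil : ((w : ℚ) - ((n : ℚ) - k) / 2 + (δ : ℚ) / 2) ≤ (i₀ : ℚ) := Int.le_ceil _
  have hi₀1 : 1 ≤ i₀ := by
    have h1 : (0:ℚ) < (w : ℚ) - ((n : ℚ) - k) / 2 + (δ : ℚ) / 2 := by
      have h2 : (0:ℚ) ≤ (δ:ℚ) := by positivity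
      linarith
    exact Int.ceil_pos.mpr h1
  have h2i₀ : 2*(w:ℤ) + k + δ ≤ n + 2*i₀ := by
    have h : ((2*(w:ℤ) + k + δ : ℤ):ℚ) ≤ (((n:ℤ) + 2*i₀ : ℤ) : ℚ) := by push_cast; linarith
    exact_mod_cast h
  set M : ℤ := ((min δ w : ℕ) : ℤ) with hMdef
  have hMw : M ≤ (w:ℤ) := by
    rw [hMdef]
    have : min δ w ≤ w := min_le_right _ _
    exact_mod_cast this
  have hMδ : M ≤ (δ:ℤ) := by
    rw [hMdef]
    have : min δ w ≤ δ := min_le_left _ _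
    exact_mod_cast this
  set X : ℤ := (δ:ℤ) * ((n:ℤ) - δ) with hXdef
  have hXn : ((δ*(n-δ) : ℕ) : ℤ) = X := by
    rw [hXdef, Nat.cast_mul, Nat.cast_sub hδn]
  set G : ℤ := i₀ * (i₀ + n - δ - w) with hGdef
  -- per-term bounds
  have hterm : ∀ i ∈ Finset.Icc i₀ M,
      0 ≤ ((gaussBinom q ((n : ℤ) - w) ((δ : ℤ) - i) : ℚ) : ℝ)
            * ((gaussBinom q w i : ℚ) : ℝ) * Q ^ (((w : ℤ) - i) * ((δ : ℤ) - i)) ∧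
      ((gaussBinom q ((n : ℤ) - w) ((δ : ℤ) - i) : ℚ) : ℝ)
            * ((gaussBinom q w i : ℚ) : ℝ) * Q ^ (((w : ℤ) - i) * ((δ : ℤ) - i))
          ≤ 16 * Q ^ (X - G) := by
    intro i hi
    rw [Finset.mem_Icc] at hi
    obtain ⟨hi1, hi2⟩ := hi
    have hi0 : 0 ≤ i := by omega
    set j := i.toNat with hjdef
    have hij : (j:ℤ) = i := Int.toNat_of_nonneg hi0
    have hjw : j ≤ w := by omega
    have hjδ : j ≤ δ := by omega
    have hji₀ : i₀ ≤ (j:ℤ) := by omega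
    have hsub1 : δ - j ≤ n - w := by omega
    have hzp : (((w:ℤ) - i) * ((δ:ℤ) - i)) = (((w-j)*(δ-j) : ℕ) : ℤ) := by
      rw [Nat.cast_mul, Nat.cast_sub hjw, Nat.cast_sub hjδ, hij]
    rw [hzp, zpow_natCast, ← hij,
      show ((n:ℤ) - w) = ((n-w:ℕ):ℤ) by omega,
      show ((δ:ℤ) - (j:ℤ)) = ((δ-j:ℕ):ℤ) by omega,
      gb_cast q (n-w) (δ-j) hsub1, gb_cast q w j hjw]
    have hgl1 := gb_prod_lower hq2 hsub1 (Q := Q)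
    have hgl2 := gb_prod_lower hq2 hjw (Q := Q)
    have hnn1 : (0:ℝ) ≤ ∏ i ∈ Finset.range (δ-j), (Q^(n-w-i)-1)/(Q^(δ-j-i)-1) :=
      le_trans (by positivity) hgl1
    have hnn2 : (0:ℝ) ≤ ∏ i ∈ Finset.range j, (Q^(w-i)-1)/(Q^(j-i)-1) :=
      le_trans (by positivity) hgl2
    constructor
    · have : (0:ℝ) ≤ Q ^ ((w-j)*(δ-j)) := by positivity
      exact mul_nonneg (mul_nonneg hnn1 hnn2) this
    · have b1 := gb_prod_upper hq2 hsub1 (Q := Q)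
      have b2 := gb_prod_upper hq2 hjw (Q := Q)
      calc (∏ i ∈ Finset.range (δ-j), (Q^(n-w-i)-1)/(Q^(δ-j-i)-1))
            * (∏ i ∈ Finset.range j, (Q^(w-i)-1)/(Q^(j-i)-1)) * Q ^ ((w-j)*(δ-j))
          ≤ (4 * Q ^ ((δ-j)*((n-w)-(δ-j)))) * (4 * Q ^ (j*(w-j))) * Q ^ ((w-j)*(δ-j)) := by
            apply mul_le_mul_of_nonneg_right _ (by positivity)
            apply mul_le_mul b1 b2 hnn2 (by positivity)
        _ = 16 * Q ^ ((δ-j)*((n-w)-(δ-j)) + j*(w-j) + (w-j)*(δ-j)) := by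
            rw [pow_add, pow_add]; ring
        _ = 16 * Q ^ (X - (j:ℤ)*((j:ℤ) + n - δ - w)) := by
            rw [← zpow_natCast Q ((δ-j)*((n-w)-(δ-j)) + j*(w-j) + (w-j)*(δ-j))]
            congr 1
            push_cast [Nat.cast_sub hjδ, Nat.cast_sub hjw, Nat.cast_sub hsub1,
              Nat.cast_sub hw2]
            rw [hXdef]
            ring
        _ ≤ 16 * Q ^ (X - G) := by
            have hpos : (0:ℤ) ≤ (j:ℤ) + i₀ + n - δ - w := by omega
            have hg : G ≤ (j:ℤ)*((j:ℤ) + n - δ - w) := by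
              rw [hGdef]
              nlinarith [mul_nonneg (sub_nonneg.2 hji₀) hpos]
            have := zpow_le_zpow_right₀ (le_of_lt hq1) (by omega : X - (j:ℤ)*((j:ℤ)+n-δ-w) ≤ X - G)
            linarith
  -- sum bound
  have hcard : (Finset.Icc i₀ M).card ≤ n := by
    rw [Int.card_Icc]
    omega
  have hS : (∑ i ∈ Finset.Icc i₀ M,
        ((gaussBinom q ((n : ℤ) - w) ((δ : ℤ) - i) : ℚ) : ℝ)
          * ((gaussBinom q w i : ℚ) : ℝ) * Q ^ (((w : ℤ) - i) * ((δ : ℤ) - i)))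
      ≤ (n:ℝ) * (16 * Q ^ (X - G)) := by
    calc (∑ i ∈ Finset.Icc i₀ M, _)
        ≤ ∑ _i ∈ Finset.Icc i₀ M, 16 * Q ^ (X - G) :=
          Finset.sum_le_sum (fun i hi => (hterm i hi).2)
      _ = ((Finset.Icc i₀ M).card : ℝ) * (16 * Q ^ (X - G)) := by
          rw [Finset.sum_const, nsmul_eq_mul]
      _ ≤ (n:ℝ) * (16 * Q ^ (X - G)) := by
          apply mul_le_mul_of_nonneg_right _ (by positivity)
          exact_mod_cast hcard
  have hS0 : 0 ≤ (∑ i ∈ Finset.Icc i₀ M,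
        ((gaussBinom q ((n : ℤ) - w) ((δ : ℤ) - i) : ℚ) : ℝ)
          * ((gaussBinom q w i : ℚ) : ℝ) * Q ^ (((w : ℤ) - i) * ((δ : ℤ) - i))) :=
    Finset.sum_nonneg (fun i hi => (hterm i hi).1)
  have hD : Q ^ (δ*(n-δ)) ≤ ((gaussBinom q n δ : ℚ):ℝ) := by
    rw [gb_cast q n δ hδn]
    exact gb_prod_lower hq2 hδn
  have hDpos : (0:ℝ) < ((gaussBinom q n δ : ℚ):ℝ) := lt_of_lt_of_le (by positivity) hD
  have hdiv : (∑ i ∈ Finset.Icc i₀ M,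
        ((gaussBinom q ((n : ℤ) - w) ((δ : ℤ) - i) : ℚ) : ℝ)
          * ((gaussBinom q w i : ℚ) : ℝ) * Q ^ (((w : ℤ) - i) * ((δ : ℤ) - i)))
        / ((gaussBinom q n δ : ℚ):ℝ)
      ≤ ((n:ℝ) * (16 * Q ^ (X - G))) / Q ^ (δ*(n-δ)) :=
    div_le_div₀ (by positivity) hS (by positivity) hD
  have hA := A_prod_upper hq2 hw2 hn (Q := Q)
  have hA0 := A_prod_nonneg hq2 hw2 hn (Q := Q)
  have hZpos : (0:ℝ) < Q ^ ((m:ℤ)*((k:ℤ)-n)) := zpow_pos hq0 _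
  have hcc : ⌈(δ : ℚ) / 2 + w - ((n : ℚ) - k) / 2⌉ = i₀ := by
    rw [hi₀def]
    congr 1
    ring
  rw [hcc]
  set E : ℤ := (m:ℤ)*((k:ℤ)-n) + ((w*(m+n-w) : ℕ):ℤ) + ((X - G) + (-X)) with hEdef
  calc (Q ^ ((m:ℤ)*((k:ℤ)-n)) * ∏ i ∈ Finset.range w,
          (Q^m - Q^i) * (Q^n - Q^i) / (Q^w - Q^i))
        * ((∑ i ∈ Finset.Icc i₀ M,
            ((gaussBinom q ((n : ℤ) - w) ((δ : ℤ) - i) : ℚ) : ℝ)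
              * ((gaussBinom q w i : ℚ) : ℝ) * Q ^ (((w : ℤ) - i) * ((δ : ℤ) - i)))
          / ((gaussBinom q n δ : ℚ):ℝ))
      ≤ (Q ^ ((m:ℤ)*((k:ℤ)-n)) * (4 * Q ^ (w*(m+n-w))))
        * (((n:ℝ) * (16 * Q ^ (X - G))) / Q ^ (δ*(n-δ))) := by
        apply mul_le_mul (mul_le_mul_of_nonneg_left hA hZpos.le) hdiv
          (div_nonneg hS0 hDpos.le) (by positivity)
    _ = 64 * (n:ℝ) * Q ^ E := by
        rw [← zpow_natCast Q (w*(m+n-w)), ← zpow_natCast Q (δ*(n-δ)), hXn,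
          div_eq_mul_inv, ← zpow_neg]
        rw [hEdef, zpow_add₀ hqne, zpow_add₀ hqne, zpow_add₀ hqne]
        ring
    _ ≤ 64 * (n:ℝ) * Q ^ ((m : ℝ) * ((k : ℝ) - n) + w * ((n : ℝ) + m) - (w : ℝ) ^ 2
          - (i₀ : ℝ) * (((n : ℝ) + k) / 2 - (⌈(δ : ℚ) / 2⌉ : ℝ)) ) := by
        rw [show (Q:ℝ) ^ E = Q ^ ((E:ℤ):ℝ) from (Real.rpow_intCast Q E).symm]
        apply mul_le_mul_of_nonneg_left _ (by positivity)
        apply Real.rpow_le_rpow_of_exponent_le (le_of_lt hq1)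
        have hi₀R : (1:ℝ) ≤ (i₀:ℝ) := by exact_mod_cast hi₀1
        have h2i₀R : 2*(w:ℝ) + k + δ ≤ (n:ℝ) + 2*(i₀:ℝ) := by exact_mod_cast h2i₀
        have hdcR : (δ:ℝ)/2 ≤ ((⌈(δ:ℚ)/2⌉ : ℤ):ℝ) := by
          have h := Int.le_ceil ((δ:ℚ)/2)
          have h2 := (Rat.cast_le (K := ℝ)).mpr h
          push_cast at h2 ⊢
          linarith
        rw [hEdef, hGdef, hXdef]
        push_cast [Nat.cast_sub hwmn]
        nlinarith [mul_nonneg (by linarith : (0:ℝ) ≤ (i₀:ℝ))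
          (by linarith : (0:ℝ) ≤ ((i₀:ℝ) + n - δ - w) - (((n:ℝ) + k)/2 - ((⌈(δ:ℚ)/2⌉ : ℤ):ℝ)))]
end
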